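/- Let φ = (1+√5)/2, let ξ ∈ ℝ be fixed, and let A(x,y,z) = (5−√5)yz⁵ + (5+√5)y⁵z − 20y³z³ + (10+10√5)x²yz³ + (10−10√5)x²y³z − 10x⁴yz. Suppose p, q, r: I → ℝ are differentiable on an interval I and satisfy, for all t ∈ I: p′ = −A(p,q,r), q′ = −A(q,r,p), r′ = −A(r,p,q), p² + q² + r² = 1, and (φ²p² − q²)(φ²q² − r²)(φ²r² − p²) = ξ. Let P = φ²p² − q² and assume P(t) ≠ 0 on I. Define Υ = (P³ − φP² − ξ)/P, and set 𝔩(X) = 14φX − 22ξ − 4φ³ and 𝔱(X) = 20X³ + 5φ²X² − 90φξX − 135ξ² − 20φ³ξ. Then Υ is differentiable and for all t ∈ I: (Υ′²·φ⁵ + 𝔩(Υ)·𝔱(Υ))² = 4·𝔱(Υ)³. In other words, the pair (Υ, Υ′) parametrizes the algebraic curve (Y²φ⁵ + 𝔩(X)𝔱(X))² = 4𝔱(X)³. -/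

import Mathlib

/-- The golden ratio. -/
noncomputable def φ : ℝ := (1 + Real.sqrt 5) / 2

/-- The numerator of the first component of the icosahedral superflow's vector field. -/
noncomputable def A (x y z : ℝ) : ℝ :=
  (5 - Real.sqrt 5) * y * z ^ 5 + (5 + Real.sqrt 5) * y ^ 5 * z - 20 * y ^ 3 * z ^ 3
    + (10 + 10 * Real.sqrt 5) * x ^ 2 * y * z ^ 3 + (10 - 10 * Real.sqrt 5) * x ^ 2 * y ^ 3 * z
    - 10 * x ^ 4 * y * z

/-- `𝔩_ξ(X) = 14φX − 22ξ − 4φ³`. -/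
noncomputable def lpoly (ξ X : ℝ) : ℝ := 14 * φ * X - 22 * ξ - 4 * φ ^ 3

/-- `𝔱_ξ(X) = 20X³ + 5φ²X² − 90φξX − 135ξ² − 20φ³ξ`. -/
noncomputable def tpoly (ξ X : ℝ) : ℝ :=
  20 * X ^ 3 + 5 * φ ^ 2 * X ^ 2 - 90 * φ * ξ * X - 135 * ξ ^ 2 - 20 * φ ^ 3 * ξ

set_option maxRecDepth 100000 in
set_option maxHeartbeats 1000000 in
private lemma lemK1 (a b c ξ : ℝ) (hs : Real.sqrt 5 ^ 2 = 5)
    (hsph : a ^ 2 + b ^ 2 + c ^ 2 = 1) (hxis : ((((1 + Real.sqrt 5) / 2) ^ 2 * a ^ 2 - b ^ 2) * (((1 + Real.sqrt 5) / 2) ^ 2 * b ^ 2 - c ^ 2) * (((1 + Real.sqrt 5) / 2) ^ 2 * c ^ 2 - a ^ 2) = ξ)) :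
    (((1 + Real.sqrt 5) / 2) ^ 2 * a ^ 2 - b ^ 2) ^ 3 - ((1 + Real.sqrt 5) / 2) * (((1 + Real.sqrt 5) / 2) ^ 2 * a ^ 2 - b ^ 2) ^ 2 - ξ = (((3:ℝ)/2) * c ^ 4 + (-3) * b ^ 2 * c ^ 2 + ((3:ℝ)/2) * b ^ 4 + (-3) * a ^ 2 * c ^ 2 + (-3) * a ^ 2 * b ^ 2 + ((3:ℝ)/2) * a ^ 4 + ((1:ℝ)/2) * Real.sqrt 5 * c ^ 4 + (-1) * Real.sqrt 5 * b ^ 2 * c ^ 2 + ((1:ℝ)/2) * Real.sqrt 5 * b ^ 4 + (-1) * Real.sqrt 5 * a ^ 2 * c ^ 2 + (-1) * Real.sqrt 5 * a ^ 2 * b ^ 2 + ((1:ℝ)/2) * Real.sqrt 5 * a ^ 4) * (((1 + Real.sqrt 5) / 2) ^ 2 * a ^ 2 - b ^ 2) := by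
  linear_combination ((1)) * hxis + (((-25:ℝ)/64) + ((5:ℝ)/4) * c ^ 2 + ((-75:ℝ)/64) * c ^ 4 + ((25:ℝ)/8) * b ^ 2 + ((-295:ℝ)/64) * b ^ 2 * c ^ 2 + ((-343:ℝ)/64) * b ^ 4 + ((-25:ℝ)/64) * a ^ 2 + ((55:ℝ)/64) * a ^ 2 * c ^ 2 + ((159:ℝ)/64) * a ^ 2 * b ^ 2 + ((-23:ℝ)/64) * a ^ 4 + ((-15:ℝ)/16) * Real.sqrt 5 + ((95:ℝ)/32) * Real.sqrt 5 * c ^ 2 + ((-85:ℝ)/32) * Real.sqrt 5 * c ^ 4 + ((135:ℝ)/32) * Real.sqrt 5 * b ^ 2 + ((-125:ℝ)/32) * Real.sqrt 5 * b ^ 2 * c ^ 2 + ((-109:ℝ)/32) * Real.sqrt 5 * b ^ 4 + ((-15:ℝ)/16) * Real.sqrt 5 * a ^ 2 + ((65:ℝ)/32) * Real.sqrt 5 * a ^ 2 * c ^ 2 + ((81:ℝ)/32) * Real.sqrt 5 * a ^ 2 * b ^ 2 + ((-25:ℝ)/32) * Real.sqrt 5 * a ^ 4 + ((-45:ℝ)/64)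 * Real.sqrt 5 ^ 2 + ((67:ℝ)/32) * Real.sqrt 5 ^ 2 * c ^ 2 + ((-105:ℝ)/64) * Real.sqrt 5 ^ 2 * c ^ 4 + ((75:ℝ)/32) * Real.sqrt 5 ^ 2 * b ^ 2 + ((-81:ℝ)/64) * Real.sqrt 5 ^ 2 * b ^ 2 * c ^ 2 + ((-65:ℝ)/64) * Real.sqrt 5 ^ 2 * b ^ 4 + ((-45:ℝ)/64) * Real.sqrt 5 ^ 2 * a ^ 2 + ((89:ℝ)/64) * Real.sqrt 5 ^ 2 * a ^ 2 * c ^ 2 + ((57:ℝ)/64) * Real.sqrt 5 ^ 2 * a ^ 2 * b ^ 2 + ((-25:ℝ)/64) * Real.sqrt 5 ^ 2 * a ^ 4 + ((-1:ℝ)/8) * Real.sqrt 5 ^ 3 + ((3:ℝ)/16) * Real.sqrt 5 ^ 3 * c ^ 2 + ((1:ℝ)/16) * Real.sqrt 5 ^ 3 * c ^ 4 + ((-1:ℝ)/16) * Real.sqrt 5 ^ 3 * b ^ 2 + ((5:ℝ)/16) * Real.sqrt 5 ^ 3 * b ^ 2 * c ^ 2 + ((5:ℝ)/16) * Real.sqrt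 5 ^ 3 * b ^ 4 + ((-1:ℝ)/8) * Real.sqrt 5 ^ 3 * a ^ 2 + ((1:ℝ)/16) * Real.sqrt 5 ^ 3 * a ^ 2 * c ^ 2 + ((-7:ℝ)/16) * Real.sqrt 5 ^ 3 * a ^ 2 * b ^ 2 + ((3:ℝ)/16) * Real.sqrt 5 ^ 3 * a ^ 4 + ((5:ℝ)/64) * Real.sqrt 5 ^ 4 + ((-5:ℝ)/16) * Real.sqrt 5 ^ 4 * c ^ 2 + ((19:ℝ)/64) * Real.sqrt 5 ^ 4 * c ^ 4 + ((-7:ℝ)/16) * Real.sqrt 5 ^ 4 * b ^ 2 + ((23:ℝ)/64) * Real.sqrt 5 ^ 4 * b ^ 2 * c ^ 2 + ((23:ℝ)/64) * Real.sqrt 5 ^ 4 * b ^ 4 + ((5:ℝ)/64) * Real.sqrt 5 ^ 4 * a ^ 2 + ((-15:ℝ)/64) * Real.sqrt 5 ^ 4 * a ^ 2 * c ^ 2 + ((-23:ℝ)/64) * Real.sqrt 5 ^ 4 * a ^ 2 * b ^ 2 + ((15:ℝ)/64) * Real.sqrt 5 ^ 4 * a ^ 4 + ((1:ℝ)/16)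 * Real.sqrt 5 ^ 5 + ((-5:ℝ)/32) * Real.sqrt 5 ^ 5 * c ^ 2 + ((3:ℝ)/32) * Real.sqrt 5 ^ 5 * c ^ 4 + ((-5:ℝ)/32) * Real.sqrt 5 ^ 5 * b ^ 2 + ((3:ℝ)/32) * Real.sqrt 5 ^ 5 * b ^ 2 * c ^ 2 + ((3:ℝ)/32) * Real.sqrt 5 ^ 5 * b ^ 4 + ((1:ℝ)/16) * Real.sqrt 5 ^ 5 * a ^ 2 + ((-3:ℝ)/32) * Real.sqrt 5 ^ 5 * a ^ 2 * c ^ 2 + ((-3:ℝ)/32) * Real.sqrt 5 ^ 5 * a ^ 2 * b ^ 2 + ((3:ℝ)/32) * Real.sqrt 5 ^ 5 * a ^ 4 + ((1:ℝ)/64) * Real.sqrt 5 ^ 6 + ((-1:ℝ)/32) * Real.sqrt 5 ^ 6 * c ^ 2 + ((1:ℝ)/64) * Real.sqrt 5 ^ 6 * c ^ 4 + ((-1:ℝ)/32) * Real.sqrt 5 ^ 6 * b ^ 2 + ((1:ℝ)/64) * Real.sqrt 5 ^ 6 * b ^ 2 * c ^ 2 + ((1:ℝ)/64) * Real.sqrt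 5 ^ 6 * b ^ 4 + ((1:ℝ)/64) * Real.sqrt 5 ^ 6 * a ^ 2 + ((-1:ℝ)/64) * Real.sqrt 5 ^ 6 * a ^ 2 * c ^ 2 + ((-1:ℝ)/64) * Real.sqrt 5 ^ 6 * a ^ 2 * b ^ 2 + ((1:ℝ)/64) * Real.sqrt 5 ^ 6 * a ^ 4) * hsph + (((5:ℝ)/64) + ((-21:ℝ)/64) * c ^ 2 + ((31:ℝ)/64) * c ^ 4 + ((-15:ℝ)/64) * c ^ 6 + ((-45:ℝ)/64) * b ^ 2 + ((115:ℝ)/64) * b ^ 2 * c ^ 2 + ((-45:ℝ)/32) * b ^ 2 * c ^ 4 + ((115:ℝ)/64) * b ^ 4 + ((-45:ℝ)/32) * b ^ 4 * c ^ 2 + ((-75:ℝ)/64) * b ^ 6 + ((3:ℝ)/16) * Real.sqrt 5 + ((-25:ℝ)/32) * Real.sqrt 5 * c ^ 2 + ((9:ℝ)/8) * Real.sqrt 5 * c ^ 4 + ((-17:ℝ)/32) * Real.sqrt 5 * c ^ 6 + ((-33:ℝ)/32) * Real.sqrt 5 * b ^ 2 + ((71:ℝ)/32) * Real.sqrt 5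 * b ^ 2 * c ^ 2 + ((-21:ℝ)/16) * Real.sqrt 5 * b ^ 2 * c ^ 4 + ((13:ℝ)/8) * Real.sqrt 5 * b ^ 4 + ((-21:ℝ)/16) * Real.sqrt 5 * b ^ 4 * c ^ 2 + ((-25:ℝ)/32) * Real.sqrt 5 * b ^ 6 + ((5:ℝ)/32) * Real.sqrt 5 ^ 2 + ((-5:ℝ)/8) * Real.sqrt 5 ^ 2 * c ^ 2 + ((27:ℝ)/32) * Real.sqrt 5 ^ 2 * c ^ 4 + ((-3:ℝ)/8) * Real.sqrt 5 ^ 2 * c ^ 6 + ((-3:ℝ)/4) * Real.sqrt 5 ^ 2 * b ^ 2 + ((3:ℝ)/2) * Real.sqrt 5 ^ 2 * b ^ 2 * c ^ 2 + ((-13:ℝ)/16) * Real.sqrt 5 ^ 2 * b ^ 2 * c ^ 4 + ((33:ℝ)/32) * Real.sqrt 5 ^ 2 * b ^ 4 + ((-13:ℝ)/16) * Real.sqrt 5 ^ 2 * b ^ 4 * c ^ 2 + ((-7:ℝ)/16) * Real.sqrt 5 ^ 2 * b ^ 6 + ((1:ℝ)/16) * Real.sqrt 5 ^ 3 + ((-7:ℝ)/32)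 * Real.sqrt 5 ^ 3 * c ^ 2 + ((1:ℝ)/4) * Real.sqrt 5 ^ 3 * c ^ 4 + ((-3:ℝ)/32) * Real.sqrt 5 ^ 3 * c ^ 6 + ((-7:ℝ)/32) * Real.sqrt 5 ^ 3 * b ^ 2 + ((13:ℝ)/32) * Real.sqrt 5 ^ 3 * b ^ 2 * c ^ 2 + ((-3:ℝ)/16) * Real.sqrt 5 ^ 3 * b ^ 2 * c ^ 4 + ((1:ℝ)/4) * Real.sqrt 5 ^ 3 * b ^ 4 + ((-3:ℝ)/16) * Real.sqrt 5 ^ 3 * b ^ 4 * c ^ 2 + ((-3:ℝ)/32) * Real.sqrt 5 ^ 3 * b ^ 6 + ((1:ℝ)/64) * Real.sqrt 5 ^ 4 + ((-3:ℝ)/64) * Real.sqrt 5 ^ 4 * c ^ 2 + ((3:ℝ)/64) * Real.sqrt 5 ^ 4 * c ^ 4 + ((-1:ℝ)/64) * Real.sqrt 5 ^ 4 * c ^ 6 + ((-3:ℝ)/64) * Real.sqrt 5 ^ 4 * b ^ 2 + ((5:ℝ)/64) * Real.sqrt 5 ^ 4 * b ^ 2 * c ^ 2 + ((-1:ℝ)/32)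 * Real.sqrt 5 ^ 4 * b ^ 2 * c ^ 4 + ((3:ℝ)/64) * Real.sqrt 5 ^ 4 * b ^ 4 + ((-1:ℝ)/32) * Real.sqrt 5 ^ 4 * b ^ 4 * c ^ 2 + ((-1:ℝ)/64) * Real.sqrt 5 ^ 4 * b ^ 6) * hs

set_option maxRecDepth 100000 in
set_option maxHeartbeats 2000000 in
private lemma lemK2 (a b c ξ : ℝ) (hs : Real.sqrt 5 ^ 2 = 5)
    (hsph : a ^ 2 + b ^ 2 + c ^ 2 = 1) (hxis : ((((1 + Real.sqrt 5) / 2) ^ 2 * a ^ 2 - b ^ 2) * (((1 + Real.sqrt 5) / 2) ^ 2 * b ^ 2 - c ^ 2) * (((1 + Real.sqrt 5) / 2) ^ 2 * c ^ 2 - a ^ 2) = ξ)) :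
    ((3 * (((1 + Real.sqrt 5) / 2) ^ 2 * a ^ 2 - b ^ 2) ^ 2 - 2 * ((1 + Real.sqrt 5) / 2) * (((1 + Real.sqrt 5) / 2) ^ 2 * a ^ 2 - b ^ 2)) * (2 * ((1 + Real.sqrt 5) / 2) ^ 2 * a * (-(A a b c)) - 2 * b * (-(A b c a))) * (((1 + Real.sqrt 5) / 2) ^ 2 * a ^ 2 - b ^ 2) - ((((1 + Real.sqrt 5) / 2) ^ 2 * a ^ 2 - b ^ 2) ^ 3 - ((1 + Real.sqrt 5) / 2) * (((1 + Real.sqrt 5) / 2) ^ 2 * a ^ 2 - b ^ 2) ^ 2 - ξ) * (2 * ((1 + Real.sqrt 5) / 2) ^ 2 * a * (-(A a b c)) - 2 * b * (-(A b c a)))) = ((8 * Real.sqrt 5 - 8) * a * b * c * ((10) * c ^ 6 + ((-85:ℝ)/2) * b ^ 2 * c ^ 4 + ((25:ℝ)/2) * b ^ 4 * c ^ 2 + (10) * b ^ 6 + ((25:ℝ)/2) * a ^ 2 * c ^ 4 + (60) * a ^ 2 * b ^ 2 * c ^ 2 + ((-85:ℝ)/2) * a ^ 2 * b ^ 4 +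 ((-85:ℝ)/2) * a ^ 4 * c ^ 2 + ((25:ℝ)/2) * a ^ 4 * b ^ 2 + (10) * a ^ 6 + (5) * Real.sqrt 5 * c ^ 6 + ((-37:ℝ)/2) * Real.sqrt 5 * b ^ 2 * c ^ 4 + ((7:ℝ)/2) * Real.sqrt 5 * b ^ 4 * c ^ 2 + (5) * Real.sqrt 5 * b ^ 6 + ((7:ℝ)/2) * Real.sqrt 5 * a ^ 2 * c ^ 4 + (30) * Real.sqrt 5 * a ^ 2 * b ^ 2 * c ^ 2 + ((-37:ℝ)/2) * Real.sqrt 5 * a ^ 2 * b ^ 4 + ((-37:ℝ)/2) * Real.sqrt 5 * a ^ 4 * c ^ 2 + ((7:ℝ)/2) * Real.sqrt 5 * a ^ 4 * b ^ 2 + (5) * Real.sqrt 5 * a ^ 6)) * (((1 + Real.sqrt 5) / 2) ^ 2 * a ^ 2 - b ^ 2) ^ 2 := by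
  unfold A
  linear_combination (((-15:ℝ)/2) * a * b * c ^ 5 + (-30) * a * b ^ 3 * c ^ 3 + ((45:ℝ)/2) * a * b ^ 5 * c + (45) * a ^ 3 * b * c ^ 3 + (-15) * a ^ 3 * b ^ 3 * c + (-15) * a ^ 5 * b * c + ((5:ℝ)/2) * Real.sqrt 5 * a * b * c ^ 5 + ((11:ℝ)/2) * Real.sqrt 5 * a * b ^ 5 * c + (15) * Real.sqrt 5 * a ^ 3 * b * c ^ 3 + (-15) * Real.sqrt 5 * a ^ 3 * b ^ 3 * c + (-8) * Real.sqrt 5 * a ^ 5 * b * c + ((3:ℝ)/2) * Real.sqrt 5 ^ 2 * a * b * c ^ 5 + (-10) * Real.sqrt 5 ^ 2 * a * b ^ 3 * c ^ 3 + ((7:ℝ)/2) * Real.sqrt 5 ^ 2 * a * b ^ 5 * c + (15) * Real.sqrt 5 ^ 2 * a ^ 3 * b * c ^ 3 + (-5) * Real.sqrt 5 ^ 2 * a ^ 3 * b ^ 3 * c + (-5) * Real.sqrt 5 ^ 2 * a ^ 5 * b * c + ((-1:ℝ)/2) * Real.sqrt 5 ^ 3 * a * b * c ^ 5 + ((1:ℝ)/2)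 * Real.sqrt 5 ^ 3 * a * b ^ 5 * c + (5) * Real.sqrt 5 ^ 3 * a ^ 3 * b * c ^ 3 + (-5) * Real.sqrt 5 ^ 3 * a ^ 3 * b ^ 3 * c) * hxis + ((5) * a * b * c + ((-1215:ℝ)/32) * a * b * c ^ 3 + ((635:ℝ)/8) * a * b * c ^ 5 + ((-3545:ℝ)/64) * a * b * c ^ 7 + ((545:ℝ)/64) * a * b * c ^ 9 + ((-1825:ℝ)/32) * a * b ^ 3 * c + ((27335:ℝ)/64) * a * b ^ 3 * c ^ 3 + ((-22545:ℝ)/32) * a * b ^ 3 * c ^ 5 + ((34095:ℝ)/128) * a * b ^ 3 * c ^ 7 + ((2705:ℝ)/16) * a * b ^ 5 * c + ((-23495:ℝ)/16) * a * b ^ 5 * c ^ 3 + ((6475:ℝ)/4) * a * b ^ 5 * c ^ 5 + ((4985:ℝ)/64) * a * b ^ 7 * c + ((182395:ℝ)/128) * a * b ^ 7 * c ^ 3 + ((-42075:ℝ)/64) * a * b ^ 9 * c + (5) * a ^ 3 * b * c + ((-1055:ℝ)/32) * a ^ 3 * b * c ^ 3 + ((1485:ℝ)/32) * a ^ 3 *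 b * c ^ 5 + ((-575:ℝ)/64) * a ^ 3 * b * c ^ 7 + ((-1665:ℝ)/32) * a ^ 3 * b ^ 3 * c + ((21895:ℝ)/64) * a ^ 3 * b ^ 3 * c ^ 3 + ((-20345:ℝ)/64) * a ^ 3 * b ^ 3 * c ^ 5 + ((3745:ℝ)/32) * a ^ 3 * b ^ 5 * c + ((-66515:ℝ)/64) * a ^ 3 * b ^ 5 * c ^ 3 + ((13315:ℝ)/64) * a ^ 3 * b ^ 7 * c + (5) * a ^ 5 * b * c + ((-895:ℝ)/32) * a ^ 5 * b * c ^ 3 + ((1195:ℝ)/64) * a ^ 5 * b * c ^ 5 + ((-1505:ℝ)/32) * a ^ 5 * b ^ 3 * c + ((17875:ℝ)/64) * a ^ 5 * b ^ 3 * c ^ 3 + ((4675:ℝ)/64) * a ^ 5 * b ^ 5 * c + (5) * a ^ 7 * b * c + ((-195:ℝ)/8) * a ^ 7 * b * c ^ 3 + ((-725:ℝ)/16) * a ^ 7 * b ^ 3 * c + ((175:ℝ)/32) * a ^ 9 * b * c + ((575:ℝ)/32) * Real.sqrt 5 * a * b * c + ((-1115:ℝ)/8) * Real.sqrt 5 *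 a * b * c ^ 3 + ((19715:ℝ)/64) * Real.sqrt 5 * a * b * c ^ 5 + ((-1905:ℝ)/8) * Real.sqrt 5 * a * b * c ^ 7 + ((3185:ℝ)/64) * Real.sqrt 5 * a * b * c ^ 9 + (-130) * Real.sqrt 5 * a * b ^ 3 * c + ((32415:ℝ)/32) * Real.sqrt 5 * a * b ^ 3 * c ^ 3 + ((-114455:ℝ)/64) * Real.sqrt 5 * a * b ^ 3 * c ^ 5 + ((100875:ℝ)/128) * Real.sqrt 5 * a * b ^ 3 * c ^ 7 + ((9735:ℝ)/64) * Real.sqrt 5 * a * b ^ 5 * c + ((-111625:ℝ)/64) * Real.sqrt 5 * a * b ^ 5 * c ^ 3 + ((32485:ℝ)/16) * Real.sqrt 5 * a * b ^ 5 * c ^ 5 + ((2255:ℝ)/8) * Real.sqrt 5 * a * b ^ 7 * c + ((57785:ℝ)/128) * Real.sqrt 5 * a * b ^ 7 * c ^ 3 + ((-21861:ℝ)/64) * Real.sqrt 5 * a * b ^ 9 * c + ((575:ℝ)/32) * Real.sqrt 5 * a ^ 3 * b * c + ((-3885:ℝ)/32) * Real.sqrt 5 * a ^ 3 * b * c ^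 3 + ((11945:ℝ)/64) * Real.sqrt 5 * a ^ 3 * b * c ^ 5 + ((-3295:ℝ)/64) * Real.sqrt 5 * a ^ 3 * b * c ^ 7 + ((-3585:ℝ)/32) * Real.sqrt 5 * a ^ 3 * b ^ 3 * c + ((24945:ℝ)/32) * Real.sqrt 5 * a ^ 3 * b ^ 3 * c ^ 3 + ((-13235:ℝ)/16) * Real.sqrt 5 * a ^ 3 * b ^ 3 * c ^ 5 + ((2565:ℝ)/64) * Real.sqrt 5 * a ^ 3 * b ^ 5 * c + ((-31265:ℝ)/32) * Real.sqrt 5 * a ^ 3 * b ^ 5 * c ^ 3 + ((22733:ℝ)/64) * Real.sqrt 5 * a ^ 3 * b ^ 7 * c + ((575:ℝ)/32) * Real.sqrt 5 * a ^ 5 * b * c + ((-1655:ℝ)/16) * Real.sqrt 5 * a ^ 5 * b * c ^ 3 + ((5395:ℝ)/64) * Real.sqrt 5 * a ^ 5 * b * c ^ 5 + ((-1505:ℝ)/16) * Real.sqrt 5 * a ^ 5 * b ^ 3 * c + ((19975:ℝ)/32) * Real.sqrt 5 * a ^ 5 * b ^ 3 * c ^ 3 + ((-3915:ℝ)/64)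 * Real.sqrt 5 * a ^ 5 * b ^ 5 * c + ((575:ℝ)/32) * Real.sqrt 5 * a ^ 7 * b * c + ((-2975:ℝ)/32) * Real.sqrt 5 * a ^ 7 * b * c ^ 3 + ((-2769:ℝ)/32) * Real.sqrt 5 * a ^ 7 * b ^ 3 * c + ((329:ℝ)/16) * Real.sqrt 5 * a ^ 9 * b * c + ((643:ℝ)/32) * Real.sqrt 5 ^ 2 * a * b * c + ((-4967:ℝ)/32) * Real.sqrt 5 ^ 2 * a * b * c ^ 3 + ((2803:ℝ)/8) * Real.sqrt 5 ^ 2 * a * b * c ^ 5 + ((-4449:ℝ)/16) * Real.sqrt 5 ^ 2 * a * b * c ^ 7 + ((1943:ℝ)/32) * Real.sqrt 5 ^ 2 * a * b * c ^ 9 + ((-2655:ℝ)/32) * Real.sqrt 5 ^ 2 * a * b ^ 3 * c + ((20139:ℝ)/32) * Real.sqrt 5 ^ 2 * a * b ^ 3 * c ^ 3 + ((-35651:ℝ)/32) * Real.sqrt 5 ^ 2 * a * b ^ 3 * c ^ 5 + ((8357:ℝ)/16) * Real.sqrt 5 ^ 2 * a * b ^ 3 * c ^ 7 + ((2373:ℝ)/32)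 * Real.sqrt 5 ^ 2 * a * b ^ 5 * c + ((-20797:ℝ)/32) * Real.sqrt 5 ^ 2 * a * b ^ 5 * c ^ 3 + ((10195:ℝ)/16) * Real.sqrt 5 ^ 2 * a * b ^ 5 * c ^ 5 + ((877:ℝ)/16) * Real.sqrt 5 ^ 2 * a * b ^ 7 * c + ((1065:ℝ)/32) * Real.sqrt 5 ^ 2 * a * b ^ 7 * c ^ 3 + ((-151:ℝ)/32) * Real.sqrt 5 ^ 2 * a * b ^ 9 * c + ((643:ℝ)/32) * Real.sqrt 5 ^ 2 * a ^ 3 * b * c + ((-1081:ℝ)/8) * Real.sqrt 5 ^ 2 * a ^ 3 * b * c ^ 3 + ((861:ℝ)/4) * Real.sqrt 5 ^ 2 * a ^ 3 * b * c ^ 5 + ((-1005:ℝ)/16) * Real.sqrt 5 ^ 2 * a ^ 3 * b * c ^ 7 + ((-503:ℝ)/8) * Real.sqrt 5 ^ 2 * a ^ 3 * b ^ 3 * c + ((13803:ℝ)/32) * Real.sqrt 5 ^ 2 * a ^ 3 * b ^ 3 * c ^ 3 + ((-3767:ℝ)/8) * Real.sqrt 5 ^ 2 * a ^ 3 * b ^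 3 * c ^ 5 + ((361:ℝ)/32) * Real.sqrt 5 ^ 2 * a ^ 3 * b ^ 5 * c + ((-7913:ℝ)/32) * Real.sqrt 5 ^ 2 * a ^ 3 * b ^ 5 * c ^ 3 + ((3135:ℝ)/32) * Real.sqrt 5 ^ 2 * a ^ 3 * b ^ 7 * c + ((643:ℝ)/32) * Real.sqrt 5 ^ 2 * a ^ 5 * b * c + ((-3681:ℝ)/32) * Real.sqrt 5 ^ 2 * a ^ 5 * b * c ^ 3 + ((817:ℝ)/8) * Real.sqrt 5 ^ 2 * a ^ 5 * b * c ^ 5 + ((-1369:ℝ)/32) * Real.sqrt 5 ^ 2 * a ^ 5 * b ^ 3 * c + ((10623:ℝ)/32) * Real.sqrt 5 ^ 2 * a ^ 5 * b ^ 3 * c ^ 3 + ((-227:ℝ)/4) * Real.sqrt 5 ^ 2 * a ^ 5 * b ^ 5 * c + ((643:ℝ)/32) * Real.sqrt 5 ^ 2 * a ^ 7 * b * c + ((-1789:ℝ)/16) * Real.sqrt 5 ^ 2 * a ^ 7 * b * c ^ 3 + (-34) * Real.sqrt 5 ^ 2 * a ^ 7 * b ^ 3 * c + ((419:ℝ)/16)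 * Real.sqrt 5 ^ 2 * a ^ 9 * b * c + ((35:ℝ)/32) * Real.sqrt 5 ^ 3 * a * b * c + ((-23:ℝ)/32) * Real.sqrt 5 ^ 3 * a * b * c ^ 3 + ((-43:ℝ)/4) * Real.sqrt 5 ^ 3 * a * b * c ^ 5 + ((261:ℝ)/8) * Real.sqrt 5 ^ 3 * a * b * c ^ 7 + ((-731:ℝ)/32) * Real.sqrt 5 ^ 3 * a * b * c ^ 9 + ((107:ℝ)/32) * Real.sqrt 5 ^ 3 * a * b ^ 3 * c + ((-4313:ℝ)/32) * Real.sqrt 5 ^ 3 * a * b ^ 3 * c ^ 3 + ((9353:ℝ)/32) * Real.sqrt 5 ^ 3 * a * b ^ 3 * c ^ 5 + ((-2185:ℝ)/16) * Real.sqrt 5 ^ 3 * a * b ^ 3 * c ^ 7 + ((1249:ℝ)/32) * Real.sqrt 5 ^ 3 * a * b ^ 5 * c + ((11275:ℝ)/32) * Real.sqrt 5 ^ 3 * a * b ^ 5 * c ^ 3 + ((-9587:ℝ)/16) * Real.sqrt 5 ^ 3 * a * b ^ 5 * c ^ 5 + ((-439:ℝ)/2) * Real.sqrt 5 ^ 3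 * a * b ^ 7 * c + ((243:ℝ)/32) * Real.sqrt 5 ^ 3 * a * b ^ 7 * c ^ 3 + ((5945:ℝ)/32) * Real.sqrt 5 ^ 3 * a * b ^ 9 * c + ((35:ℝ)/32) * Real.sqrt 5 ^ 3 * a ^ 3 * b * c + ((3:ℝ)/8) * Real.sqrt 5 ^ 3 * a ^ 3 * b * c ^ 3 + ((-83:ℝ)/8) * Real.sqrt 5 ^ 3 * a ^ 3 * b * c ^ 5 + ((89:ℝ)/4) * Real.sqrt 5 ^ 3 * a ^ 3 * b * c ^ 7 + ((71:ℝ)/16) * Real.sqrt 5 ^ 3 * a ^ 3 * b ^ 3 * c + ((-4159:ℝ)/32) * Real.sqrt 5 ^ 3 * a ^ 3 * b ^ 3 * c ^ 3 + ((2447:ℝ)/16) * Real.sqrt 5 ^ 3 * a ^ 3 * b ^ 3 * c ^ 5 + ((1391:ℝ)/32) * Real.sqrt 5 ^ 3 * a ^ 3 * b ^ 5 * c + ((7707:ℝ)/32) * Real.sqrt 5 ^ 3 * a ^ 3 * b ^ 5 * c ^ 3 + ((-5073:ℝ)/32) * Real.sqrt 5 ^ 3 * a ^ 3 * b ^ 7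 * c + ((35:ℝ)/32) * Real.sqrt 5 ^ 3 * a ^ 5 * b * c + ((47:ℝ)/32) * Real.sqrt 5 ^ 3 * a ^ 5 * b * c ^ 3 + ((-121:ℝ)/16) * Real.sqrt 5 ^ 3 * a ^ 5 * b * c ^ 5 + ((177:ℝ)/32) * Real.sqrt 5 ^ 3 * a ^ 5 * b ^ 3 * c + ((-2465:ℝ)/32) * Real.sqrt 5 ^ 3 * a ^ 5 * b ^ 3 * c ^ 3 + ((355:ℝ)/16) * Real.sqrt 5 ^ 3 * a ^ 5 * b ^ 5 * c + ((35:ℝ)/32) * Real.sqrt 5 ^ 3 * a ^ 7 * b * c + ((-299:ℝ)/16) * Real.sqrt 5 ^ 3 * a ^ 7 * b * c ^ 3 + ((55:ℝ)/16) * Real.sqrt 5 ^ 3 * a ^ 7 * b ^ 3 * c + ((145:ℝ)/16) * Real.sqrt 5 ^ 3 * a ^ 9 * b * c + ((-385:ℝ)/32) * Real.sqrt 5 ^ 4 * a * b * c + ((3327:ℝ)/32) * Real.sqrt 5 ^ 4 * a * b * c ^ 3 + ((-509:ℝ)/2) * Real.sqrt 5 ^ 4 * a * b * c ^ 5 + ((7633:ℝ)/32)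 * Real.sqrt 5 ^ 4 * a * b * c ^ 7 + ((-603:ℝ)/8) * Real.sqrt 5 ^ 4 * a * b * c ^ 9 + ((699:ℝ)/32) * Real.sqrt 5 ^ 4 * a * b ^ 3 * c + ((-5061:ℝ)/16) * Real.sqrt 5 ^ 4 * a * b ^ 3 * c ^ 3 + ((20667:ℝ)/32) * Real.sqrt 5 ^ 4 * a * b ^ 3 * c ^ 5 + ((-21585:ℝ)/64) * Real.sqrt 5 ^ 4 * a * b ^ 3 * c ^ 7 + ((1769:ℝ)/32) * Real.sqrt 5 ^ 4 * a * b ^ 5 * c + ((7779:ℝ)/32) * Real.sqrt 5 ^ 4 * a * b ^ 5 * c ^ 3 + ((-6365:ℝ)/16) * Real.sqrt 5 ^ 4 * a * b ^ 5 * c ^ 5 + ((-4973:ℝ)/32) * Real.sqrt 5 ^ 4 * a * b ^ 7 * c + ((1001:ℝ)/64) * Real.sqrt 5 ^ 4 * a * b ^ 7 * c ^ 3 + ((1529:ℝ)/16) * Real.sqrt 5 ^ 4 * a * b ^ 9 * c + ((-385:ℝ)/32) * Real.sqrt 5 ^ 4 * a ^ 3 * b * c + ((1471:ℝ)/16) *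 Real.sqrt 5 ^ 4 * a ^ 3 * b * c ^ 3 + ((-2601:ℝ)/16) * Real.sqrt 5 ^ 4 * a ^ 3 * b * c ^ 5 + ((2431:ℝ)/32) * Real.sqrt 5 ^ 4 * a ^ 3 * b * c ^ 7 + ((157:ℝ)/16) * Real.sqrt 5 ^ 4 * a ^ 3 * b ^ 3 * c + ((-3433:ℝ)/16) * Real.sqrt 5 ^ 4 * a ^ 3 * b ^ 3 * c ^ 3 + ((8643:ℝ)/32) * Real.sqrt 5 ^ 4 * a ^ 3 * b ^ 3 * c ^ 5 + ((2083:ℝ)/32) * Real.sqrt 5 ^ 4 * a ^ 3 * b ^ 5 * c + ((669:ℝ)/8) * Real.sqrt 5 ^ 4 * a ^ 3 * b ^ 5 * c ^ 3 + ((-1335:ℝ)/16) * Real.sqrt 5 ^ 4 * a ^ 3 * b ^ 7 * c + ((-385:ℝ)/32) * Real.sqrt 5 ^ 4 * a ^ 5 * b * c + ((2557:ℝ)/32) * Real.sqrt 5 ^ 4 * a ^ 5 * b * c ^ 3 + ((-2645:ℝ)/32) * Real.sqrt 5 ^ 4 * a ^ 5 * b * c ^ 5 + ((-71:ℝ)/32)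 * Real.sqrt 5 ^ 4 * a ^ 5 * b ^ 3 * c + ((-1765:ℝ)/16) * Real.sqrt 5 ^ 4 * a ^ 5 * b ^ 3 * c ^ 3 + ((1447:ℝ)/32) * Real.sqrt 5 ^ 4 * a ^ 5 * b ^ 5 * c + ((-385:ℝ)/32) * Real.sqrt 5 ^ 4 * a ^ 7 * b * c + ((811:ℝ)/16) * Real.sqrt 5 ^ 4 * a ^ 7 * b * c ^ 3 + ((-85:ℝ)/8) * Real.sqrt 5 ^ 4 * a ^ 7 * b ^ 3 * c + ((-45:ℝ)/8) * Real.sqrt 5 ^ 4 * a ^ 9 * b * c + ((-195:ℝ)/32) * Real.sqrt 5 ^ 5 * a * b * c + ((1693:ℝ)/32) * Real.sqrt 5 ^ 5 * a * b * c ^ 3 + ((-4053:ℝ)/32) * Real.sqrt 5 ^ 5 * a * b * c ^ 5 + ((909:ℝ)/8) * Real.sqrt 5 ^ 5 * a * b * c ^ 7 + ((-535:ℝ)/16) * Real.sqrt 5 ^ 5 * a * b * c ^ 9 + ((255:ℝ)/32) * Real.sqrt 5 ^ 5 * a * b ^ 3 * c + ((-4059:ℝ)/32) * Real.sqrt 5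 ^ 5 * a * b ^ 3 * c ^ 3 + ((4183:ℝ)/16) * Real.sqrt 5 ^ 5 * a * b ^ 3 * c ^ 5 + ((-9037:ℝ)/64) * Real.sqrt 5 ^ 5 * a * b ^ 3 * c ^ 7 + ((217:ℝ)/8) * Real.sqrt 5 ^ 5 * a * b ^ 5 * c + ((525:ℝ)/16) * Real.sqrt 5 ^ 5 * a * b ^ 5 * c ^ 3 + ((-1097:ℝ)/16) * Real.sqrt 5 ^ 5 * a * b ^ 5 * c ^ 5 + ((-329:ℝ)/8) * Real.sqrt 5 ^ 5 * a * b ^ 7 * c + ((1347:ℝ)/64) * Real.sqrt 5 ^ 5 * a * b ^ 7 * c ^ 3 + (10) * Real.sqrt 5 ^ 5 * a * b ^ 9 * c + ((-195:ℝ)/32) * Real.sqrt 5 ^ 5 * a ^ 3 * b * c + ((749:ℝ)/16) * Real.sqrt 5 ^ 5 * a ^ 3 * b * c ^ 3 + ((-2555:ℝ)/32) * Real.sqrt 5 ^ 5 * a ^ 3 * b * c ^ 5 + ((1081:ℝ)/32) * Real.sqrt 5 ^ 5 * a ^ 3 * b * c ^ 7 + ((15:ℝ)/8) * Real.sqrt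 5 ^ 5 * a ^ 3 * b ^ 3 * c + ((-2501:ℝ)/32) * Real.sqrt 5 ^ 5 * a ^ 3 * b ^ 3 * c ^ 3 + ((1655:ℝ)/16) * Real.sqrt 5 ^ 5 * a ^ 3 * b ^ 3 * c ^ 5 + (29) * Real.sqrt 5 ^ 5 * a ^ 3 * b ^ 5 * c + ((-603:ℝ)/32) * Real.sqrt 5 ^ 5 * a ^ 3 * b ^ 5 * c ^ 3 + ((-87:ℝ)/8) * Real.sqrt 5 ^ 5 * a ^ 3 * b ^ 7 * c + ((-195:ℝ)/32) * Real.sqrt 5 ^ 5 * a ^ 5 * b * c + ((1303:ℝ)/32) * Real.sqrt 5 ^ 5 * a ^ 5 * b * c ^ 3 + ((-1267:ℝ)/32) * Real.sqrt 5 ^ 5 * a ^ 5 * b * c ^ 5 + ((-135:ℝ)/32) * Real.sqrt 5 ^ 5 * a ^ 5 * b ^ 3 * c + ((-963:ℝ)/32) * Real.sqrt 5 ^ 5 * a ^ 5 * b ^ 3 * c ^ 3 + ((543:ℝ)/32) * Real.sqrt 5 ^ 5 * a ^ 5 * b ^ 5 * c + ((-195:ℝ)/32) * Real.sqrt 5 ^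 5 * a ^ 7 * b * c + ((197:ℝ)/8) * Real.sqrt 5 ^ 5 * a ^ 7 * b * c ^ 3 + ((-45:ℝ)/8) * Real.sqrt 5 ^ 5 * a ^ 7 * b ^ 3 * c + ((-45:ℝ)/16) * Real.sqrt 5 ^ 5 * a ^ 9 * b * c + ((25:ℝ)/32) * Real.sqrt 5 ^ 6 * a * b * c + ((-157:ℝ)/32) * Real.sqrt 5 ^ 6 * a * b * c ^ 3 + ((95:ℝ)/8) * Real.sqrt 5 ^ 6 * a * b * c ^ 5 + ((-197:ℝ)/16) * Real.sqrt 5 ^ 6 * a * b * c ^ 7 + ((145:ℝ)/32) * Real.sqrt 5 ^ 6 * a * b * c ^ 9 + ((-69:ℝ)/32) * Real.sqrt 5 ^ 6 * a * b ^ 3 * c + ((597:ℝ)/32) * Real.sqrt 5 ^ 6 * a * b ^ 3 * c ^ 3 + ((-1177:ℝ)/32) * Real.sqrt 5 ^ 6 * a * b ^ 3 * c ^ 5 + ((157:ℝ)/8) * Real.sqrt 5 ^ 6 * a * b ^ 3 * c ^ 7 + ((-137:ℝ)/32) * Real.sqrt 5 ^ 6 * a * b ^ 5 * c + ((-423:ℝ)/32)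 * Real.sqrt 5 ^ 6 * a * b ^ 5 * c ^ 3 + ((433:ℝ)/16) * Real.sqrt 5 ^ 6 * a * b ^ 5 * c ^ 5 + ((221:ℝ)/16) * Real.sqrt 5 ^ 6 * a * b ^ 7 * c + ((-191:ℝ)/32) * Real.sqrt 5 ^ 6 * a * b ^ 7 * c ^ 3 + ((-265:ℝ)/32) * Real.sqrt 5 ^ 6 * a * b ^ 9 * c + ((25:ℝ)/32) * Real.sqrt 5 ^ 6 * a ^ 3 * b * c + ((-33:ℝ)/8) * Real.sqrt 5 ^ 6 * a ^ 3 * b * c ^ 3 + ((31:ℝ)/4) * Real.sqrt 5 ^ 6 * a ^ 3 * b * c ^ 5 + ((-73:ℝ)/16) * Real.sqrt 5 ^ 6 * a ^ 3 * b * c ^ 7 + ((-11:ℝ)/8) * Real.sqrt 5 ^ 6 * a ^ 3 * b ^ 3 * c + ((421:ℝ)/32) * Real.sqrt 5 ^ 6 * a ^ 3 * b ^ 3 * c ^ 3 + (-16) * Real.sqrt 5 ^ 6 * a ^ 3 * b ^ 3 * c ^ 5 + ((-181:ℝ)/32) * Real.sqrt 5 ^ 6 * a ^ 3 * b ^ 5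 * c + ((-183:ℝ)/32) * Real.sqrt 5 ^ 6 * a ^ 3 * b ^ 5 * c ^ 3 + ((265:ℝ)/32) * Real.sqrt 5 ^ 6 * a ^ 3 * b ^ 7 * c + ((25:ℝ)/32) * Real.sqrt 5 ^ 6 * a ^ 5 * b * c + ((-107:ℝ)/32) * Real.sqrt 5 ^ 6 * a ^ 5 * b * c ^ 3 + ((17:ℝ)/4) * Real.sqrt 5 ^ 6 * a ^ 5 * b * c ^ 5 + ((-19:ℝ)/32) * Real.sqrt 5 ^ 6 * a ^ 5 * b ^ 3 * c + ((385:ℝ)/32) * Real.sqrt 5 ^ 6 * a ^ 5 * b ^ 3 * c ^ 3 + ((-67:ℝ)/8) * Real.sqrt 5 ^ 6 * a ^ 5 * b ^ 5 * c + ((25:ℝ)/32) * Real.sqrt 5 ^ 6 * a ^ 7 * b * c + ((-111:ℝ)/16) * Real.sqrt 5 ^ 6 * a ^ 7 * b * c ^ 3 + (3) * Real.sqrt 5 ^ 6 * a ^ 7 * b ^ 3 * c + ((29:ℝ)/16) * Real.sqrt 5 ^ 6 * a ^ 9 * b * c + ((33:ℝ)/32) * Real.sqrt 5 ^ 7 *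 a * b * c + ((-277:ℝ)/32) * Real.sqrt 5 ^ 7 * a * b * c ^ 3 + ((167:ℝ)/8) * Real.sqrt 5 ^ 7 * a * b * c ^ 5 + ((-157:ℝ)/8) * Real.sqrt 5 ^ 7 * a * b * c ^ 7 + ((203:ℝ)/32) * Real.sqrt 5 ^ 7 * a * b * c ^ 9 + ((-47:ℝ)/32) * Real.sqrt 5 ^ 7 * a * b ^ 3 * c + ((725:ℝ)/32) * Real.sqrt 5 ^ 7 * a * b ^ 3 * c ^ 3 + ((-1497:ℝ)/32) * Real.sqrt 5 ^ 7 * a * b ^ 3 * c ^ 5 + ((101:ℝ)/4) * Real.sqrt 5 ^ 7 * a * b ^ 3 * c ^ 7 + ((-185:ℝ)/32) * Real.sqrt 5 ^ 7 * a * b ^ 5 * c + ((-307:ℝ)/32) * Real.sqrt 5 ^ 7 * a * b ^ 5 * c ^ 3 + ((343:ℝ)/16) * Real.sqrt 5 ^ 7 * a * b ^ 5 * c ^ 5 + ((49:ℝ)/4) * Real.sqrt 5 ^ 7 * a * b ^ 7 * c + ((-181:ℝ)/32) * Real.sqrt 5 ^ 7 * a * b ^ 7 * c ^ 3 + ((-193:ℝ)/32)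 * Real.sqrt 5 ^ 7 * a * b ^ 9 * c + ((33:ℝ)/32) * Real.sqrt 5 ^ 7 * a ^ 3 * b * c + ((-61:ℝ)/8) * Real.sqrt 5 ^ 7 * a ^ 3 * b * c ^ 3 + ((53:ℝ)/4) * Real.sqrt 5 ^ 7 * a ^ 3 * b * c ^ 5 + ((-51:ℝ)/8) * Real.sqrt 5 ^ 7 * a ^ 3 * b * c ^ 7 + ((-7:ℝ)/16) * Real.sqrt 5 ^ 7 * a ^ 3 * b ^ 3 * c + ((467:ℝ)/32) * Real.sqrt 5 ^ 7 * a ^ 3 * b ^ 3 * c ^ 3 + ((-303:ℝ)/16) * Real.sqrt 5 ^ 7 * a ^ 3 * b ^ 3 * c ^ 5 + ((-199:ℝ)/32) * Real.sqrt 5 ^ 7 * a ^ 3 * b ^ 5 * c + ((-39:ℝ)/32) * Real.sqrt 5 ^ 7 * a ^ 3 * b ^ 5 * c ^ 3 + ((193:ℝ)/32) * Real.sqrt 5 ^ 7 * a ^ 3 * b ^ 7 * c + ((33:ℝ)/32) * Real.sqrt 5 ^ 7 * a ^ 5 * b * c + ((-211:ℝ)/32) * Real.sqrt 5 ^ 7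 * a ^ 5 * b * c ^ 3 + ((107:ℝ)/16) * Real.sqrt 5 ^ 7 * a ^ 5 * b * c ^ 5 + ((19:ℝ)/32) * Real.sqrt 5 ^ 7 * a ^ 5 * b ^ 3 * c + ((285:ℝ)/32) * Real.sqrt 5 ^ 7 * a ^ 5 * b ^ 3 * c ^ 3 + ((-93:ℝ)/16) * Real.sqrt 5 ^ 7 * a ^ 5 * b ^ 5 * c + ((33:ℝ)/32) * Real.sqrt 5 ^ 7 * a ^ 7 * b * c + ((-109:ℝ)/16) * Real.sqrt 5 ^ 7 * a ^ 7 * b * c ^ 3 + ((41:ℝ)/16) * Real.sqrt 5 ^ 7 * a ^ 7 * b ^ 3 * c + ((19:ℝ)/16) * Real.sqrt 5 ^ 7 * a ^ 9 * b * c + ((5:ℝ)/32) * Real.sqrt 5 ^ 8 * a * b * c + ((-15:ℝ)/8) * Real.sqrt 5 ^ 8 * a * b * c ^ 3 + ((39:ℝ)/8) * Real.sqrt 5 ^ 8 * a * b * c ^ 5 + ((-305:ℝ)/64) * Real.sqrt 5 ^ 8 * a * b * c ^ 7 + ((103:ℝ)/64) * Real.sqrt 5 ^ 8 * a * b * c ^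 9 + ((5:ℝ)/16) * Real.sqrt 5 ^ 8 * a * b ^ 3 * c + ((205:ℝ)/64) * Real.sqrt 5 ^ 8 * a * b ^ 3 * c ^ 3 + ((-135:ℝ)/16) * Real.sqrt 5 ^ 8 * a * b ^ 3 * c ^ 5 + ((635:ℝ)/128) * Real.sqrt 5 ^ 8 * a * b ^ 3 * c ^ 7 + ((-71:ℝ)/32) * Real.sqrt 5 ^ 8 * a * b ^ 5 * c + ((15:ℝ)/32) * Real.sqrt 5 ^ 8 * a * b ^ 5 * c ^ 3 + ((45:ℝ)/16) * Real.sqrt 5 ^ 8 * a * b ^ 5 * c ^ 5 + ((185:ℝ)/64) * Real.sqrt 5 ^ 8 * a * b ^ 7 * c + ((-245:ℝ)/128) * Real.sqrt 5 ^ 8 * a * b ^ 7 * c ^ 3 + ((-73:ℝ)/64) * Real.sqrt 5 ^ 8 * a * b ^ 9 * c + ((5:ℝ)/32) * Real.sqrt 5 ^ 8 * a ^ 3 * b * c + ((-55:ℝ)/32) * Real.sqrt 5 ^ 8 * a ^ 3 * b * c ^ 3 + ((101:ℝ)/32) * Real.sqrt 5 ^ 8 * a ^ 3 * b * c ^ 5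 + ((-103:ℝ)/64) * Real.sqrt 5 ^ 8 * a ^ 3 * b * c ^ 7 + ((15:ℝ)/32) * Real.sqrt 5 ^ 8 * a ^ 3 * b ^ 3 * c + ((125:ℝ)/64) * Real.sqrt 5 ^ 8 * a ^ 3 * b ^ 3 * c ^ 3 + ((-213:ℝ)/64) * Real.sqrt 5 ^ 8 * a ^ 3 * b ^ 3 * c ^ 5 + ((-7:ℝ)/4) * Real.sqrt 5 ^ 8 * a ^ 3 * b ^ 5 * c + ((43:ℝ)/64) * Real.sqrt 5 ^ 8 * a ^ 3 * b ^ 5 * c ^ 3 + ((73:ℝ)/64) * Real.sqrt 5 ^ 8 * a ^ 3 * b ^ 7 * c + ((5:ℝ)/32) * Real.sqrt 5 ^ 8 * a ^ 5 * b * c + ((-25:ℝ)/16) * Real.sqrt 5 ^ 8 * a ^ 5 * b * c ^ 3 + ((103:ℝ)/64) * Real.sqrt 5 ^ 8 * a ^ 5 * b * c ^ 5 + ((5:ℝ)/8) * Real.sqrt 5 ^ 8 * a ^ 5 * b ^ 3 * c + ((65:ℝ)/64) * Real.sqrt 5 ^ 8 * a ^ 5 * b ^ 3 * c ^ 3 +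 ((-73:ℝ)/64) * Real.sqrt 5 ^ 8 * a ^ 5 * b ^ 5 * c + ((5:ℝ)/32) * Real.sqrt 5 ^ 8 * a ^ 7 * b * c + ((-25:ℝ)/16) * Real.sqrt 5 ^ 8 * a ^ 7 * b * c ^ 3 + ((15:ℝ)/16) * Real.sqrt 5 ^ 8 * a ^ 7 * b ^ 3 * c + ((5:ℝ)/32) * Real.sqrt 5 ^ 8 * a ^ 9 * b * c + ((-5:ℝ)/32) * Real.sqrt 5 ^ 9 * a * b * c ^ 3 + ((31:ℝ)/64) * Real.sqrt 5 ^ 9 * a * b * c ^ 5 + ((-1:ℝ)/2) * Real.sqrt 5 ^ 9 * a * b * c ^ 7 + ((11:ℝ)/64) * Real.sqrt 5 ^ 9 * a * b * c ^ 9 + ((5:ℝ)/32) * Real.sqrt 5 ^ 9 * a * b ^ 3 * c + ((-37:ℝ)/64) * Real.sqrt 5 ^ 9 * a * b ^ 3 * c ^ 5 + ((55:ℝ)/128) * Real.sqrt 5 ^ 9 * a * b ^ 3 * c ^ 7 + ((-31:ℝ)/64) * Real.sqrt 5 ^ 9 * a * b ^ 5 * c + ((37:ℝ)/64) * Real.sqrt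 5 ^ 9 * a * b ^ 5 * c ^ 3 + ((1:ℝ)/2) * Real.sqrt 5 ^ 9 * a * b ^ 7 * c + ((-55:ℝ)/128) * Real.sqrt 5 ^ 9 * a * b ^ 7 * c ^ 3 + ((-11:ℝ)/64) * Real.sqrt 5 ^ 9 * a * b ^ 9 * c + ((-5:ℝ)/32) * Real.sqrt 5 ^ 9 * a ^ 3 * b * c ^ 3 + ((21:ℝ)/64) * Real.sqrt 5 ^ 9 * a ^ 3 * b * c ^ 5 + ((-11:ℝ)/64) * Real.sqrt 5 ^ 9 * a ^ 3 * b * c ^ 7 + ((5:ℝ)/32) * Real.sqrt 5 ^ 9 * a ^ 3 * b ^ 3 * c + ((-1:ℝ)/4) * Real.sqrt 5 ^ 9 * a ^ 3 * b ^ 3 * c ^ 5 + ((-21:ℝ)/64) * Real.sqrt 5 ^ 9 * a ^ 3 * b ^ 5 * c + ((1:ℝ)/4) * Real.sqrt 5 ^ 9 * a ^ 3 * b ^ 5 * c ^ 3 + ((11:ℝ)/64) * Real.sqrt 5 ^ 9 * a ^ 3 * b ^ 7 * c + ((-5:ℝ)/32) * Real.sqrt 5 ^ 9 * a ^ 5 *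 b * c ^ 3 + ((11:ℝ)/64) * Real.sqrt 5 ^ 9 * a ^ 5 * b * c ^ 5 + ((5:ℝ)/32) * Real.sqrt 5 ^ 9 * a ^ 5 * b ^ 3 * c + ((-11:ℝ)/64) * Real.sqrt 5 ^ 9 * a ^ 5 * b ^ 5 * c + ((-5:ℝ)/32) * Real.sqrt 5 ^ 9 * a ^ 7 * b * c ^ 3 + ((5:ℝ)/32) * Real.sqrt 5 ^ 9 * a ^ 7 * b ^ 3 * c) * hsph + ((-1) * a * b * c + ((275:ℝ)/32) * a * b * c ^ 3 + ((-751:ℝ)/32) * a * b * c ^ 5 + ((1725:ℝ)/64) * a * b * c ^ 7 + ((-409:ℝ)/32) * a * b * c ^ 9 + ((109:ℝ)/64) * a * b * c ^ 11 + ((397:ℝ)/32) * a * b ^ 3 * c + ((-6683:ℝ)/64) * a * b ^ 3 * c ^ 3 + ((15501:ℝ)/64) * a * b ^ 3 * c ^ 5 + ((-26273:ℝ)/128) * a * b ^ 3 * c ^ 7 + ((6989:ℝ)/128) * a * b ^ 3 * c ^ 9 + ((-1447:ℝ)/32) * a * b ^ 5 * c + ((26427:ℝ)/64) * a * b ^ 5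 * c ^ 3 + ((-24243:ℝ)/32) * a * b ^ 5 * c ^ 5 + ((46031:ℝ)/128) * a * b ^ 5 * c ^ 7 + ((1167:ℝ)/64) * a * b ^ 7 * c + ((-71693:ℝ)/128) * a * b ^ 7 * c ^ 3 + ((87199:ℝ)/128) * a * b ^ 7 * c ^ 5 + ((2317:ℝ)/16) * a * b ^ 9 * c + ((18589:ℝ)/128) * a * b ^ 9 * c ^ 3 + ((-10015:ℝ)/64) * a * b ^ 11 * c + ((-115:ℝ)/32) * Real.sqrt 5 * a * b * c + ((1007:ℝ)/32) * Real.sqrt 5 * a * b * c ^ 3 + ((-5727:ℝ)/64) * Real.sqrt 5 * a * b * c ^ 5 + ((6991:ℝ)/64) * Real.sqrt 5 * a * b * c ^ 7 + ((-3685:ℝ)/64) * Real.sqrt 5 * a * b * c ^ 9 + ((637:ℝ)/64) * Real.sqrt 5 * a * b * c ^ 11 + ((947:ℝ)/32) * Real.sqrt 5 * a * b ^ 3 * c + ((-8207:ℝ)/32) * Real.sqrt 5 * a * b ^ 3 * c ^ 3 + ((4975:ℝ)/8) * Real.sqrt 5 * a * b ^ 3 * c ^ 5 + ((-72053:ℝ)/128)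 * Real.sqrt 5 * a * b ^ 3 * c ^ 7 + ((21369:ℝ)/128) * Real.sqrt 5 * a * b ^ 3 * c ^ 9 + ((-3611:ℝ)/64) * Real.sqrt 5 * a * b ^ 5 * c + ((18619:ℝ)/32) * Real.sqrt 5 * a * b ^ 5 * c ^ 3 + ((-17793:ℝ)/16) * Real.sqrt 5 * a * b ^ 5 * c ^ 5 + ((72835:ℝ)/128) * Real.sqrt 5 * a * b ^ 5 * c ^ 7 + ((-1661:ℝ)/64) * Real.sqrt 5 * a * b ^ 7 * c + ((-48607:ℝ)/128) * Real.sqrt 5 * a * b ^ 7 * c ^ 3 + ((59005:ℝ)/128) * Real.sqrt 5 * a * b ^ 7 * c ^ 5 + ((7801:ℝ)/64) * Real.sqrt 5 * a * b ^ 9 * c + ((4503:ℝ)/128) * Real.sqrt 5 * a * b ^ 9 * c ^ 3 + ((-4001:ℝ)/64) * Real.sqrt 5 * a * b ^ 11 * c + ((-135:ℝ)/32) * Real.sqrt 5 ^ 2 * a * b * c + ((1177:ℝ)/32) * Real.sqrt 5 ^ 2 * a * b * c ^ 3 + ((-1693:ℝ)/16) * Real.sqrt 5 ^ 2 * a * b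 * c ^ 5 + ((8389:ℝ)/64) * Real.sqrt 5 ^ 2 * a * b * c ^ 7 + ((-1125:ℝ)/16) * Real.sqrt 5 ^ 2 * a * b * c ^ 9 + ((799:ℝ)/64) * Real.sqrt 5 ^ 2 * a * b * c ^ 11 + ((739:ℝ)/32) * Real.sqrt 5 ^ 2 * a * b ^ 3 * c + ((-12441:ℝ)/64) * Real.sqrt 5 ^ 2 * a * b ^ 3 * c ^ 3 + ((29901:ℝ)/64) * Real.sqrt 5 ^ 2 * a * b ^ 3 * c ^ 5 + ((-54265:ℝ)/128) * Real.sqrt 5 ^ 2 * a * b ^ 3 * c ^ 7 + ((16317:ℝ)/128) * Real.sqrt 5 ^ 2 * a * b ^ 3 * c ^ 9 + ((-1295:ℝ)/32) * Real.sqrt 5 ^ 2 * a * b ^ 5 * c + ((22609:ℝ)/64) * Real.sqrt 5 ^ 2 * a * b ^ 5 * c ^ 3 + ((-20229:ℝ)/32) * Real.sqrt 5 ^ 2 * a * b ^ 5 * c ^ 5 + ((39711:ℝ)/128) * Real.sqrt 5 ^ 2 * a * b ^ 5 * c ^ 7 + ((481:ℝ)/64) * Real.sqrt 5 ^ 2 *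 a * b ^ 7 * c + ((-30297:ℝ)/128) * Real.sqrt 5 ^ 2 * a * b ^ 7 * c ^ 3 + ((31279:ℝ)/128) * Real.sqrt 5 ^ 2 * a * b ^ 7 * c ^ 5 + ((1279:ℝ)/32) * Real.sqrt 5 ^ 2 * a * b ^ 9 * c + ((5421:ℝ)/128) * Real.sqrt 5 ^ 2 * a * b ^ 9 * c ^ 3 + ((-1641:ℝ)/64) * Real.sqrt 5 ^ 2 * a * b ^ 11 * c + ((-15:ℝ)/16) * Real.sqrt 5 ^ 3 * a * b * c + ((213:ℝ)/32) * Real.sqrt 5 ^ 3 * a * b * c ^ 3 + ((-1017:ℝ)/64) * Real.sqrt 5 ^ 3 * a * b * c ^ 5 + ((843:ℝ)/64) * Real.sqrt 5 ^ 3 * a * b * c ^ 7 + ((-27:ℝ)/64) * Real.sqrt 5 ^ 3 * a * b * c ^ 9 + ((-165:ℝ)/64) * Real.sqrt 5 ^ 3 * a * b * c ^ 11 + ((175:ℝ)/32) * Real.sqrt 5 ^ 3 * a * b ^ 3 * c + ((-381:ℝ)/16) * Real.sqrt 5 ^ 3 * a * b ^ 3 * c ^ 3 + ((589:ℝ)/16)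 * Real.sqrt 5 ^ 3 * a * b ^ 3 * c ^ 5 + ((-2597:ℝ)/128) * Real.sqrt 5 ^ 3 * a * b ^ 3 * c ^ 7 + ((225:ℝ)/128) * Real.sqrt 5 ^ 3 * a * b ^ 3 * c ^ 9 + ((-1179:ℝ)/64) * Real.sqrt 5 ^ 3 * a * b ^ 5 * c + ((107:ℝ)/4) * Real.sqrt 5 ^ 3 * a * b ^ 5 * c ^ 3 + ((105:ℝ)/4) * Real.sqrt 5 ^ 3 * a * b ^ 5 * c ^ 5 + ((-4381:ℝ)/128) * Real.sqrt 5 ^ 3 * a * b ^ 5 * c ^ 7 + ((2977:ℝ)/64) * Real.sqrt 5 ^ 3 * a * b ^ 7 * c + ((-6387:ℝ)/128) * Real.sqrt 5 ^ 3 * a * b ^ 7 * c ^ 3 + ((-2979:ℝ)/128) * Real.sqrt 5 ^ 3 * a * b ^ 7 * c ^ 5 + ((-3653:ℝ)/64) * Real.sqrt 5 ^ 3 * a * b ^ 9 * c + ((5631:ℝ)/128) * Real.sqrt 5 ^ 3 * a * b ^ 9 * c ^ 3 + ((1565:ℝ)/64) * Real.sqrt 5 ^ 3 * a * b ^ 11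 * c + ((25:ℝ)/16) * Real.sqrt 5 ^ 4 * a * b * c + ((-507:ℝ)/32) * Real.sqrt 5 ^ 4 * a * b * c ^ 3 + ((1617:ℝ)/32) * Real.sqrt 5 ^ 4 * a * b * c ^ 5 + ((-4633:ℝ)/64) * Real.sqrt 5 ^ 4 * a * b * c ^ 7 + ((1559:ℝ)/32) * Real.sqrt 5 ^ 4 * a * b * c ^ 9 + ((-805:ℝ)/64) * Real.sqrt 5 ^ 4 * a * b * c ^ 11 + ((-69:ℝ)/32) * Real.sqrt 5 ^ 4 * a * b ^ 3 * c + ((3171:ℝ)/64) * Real.sqrt 5 ^ 4 * a * b ^ 3 * c ^ 3 + ((-9593:ℝ)/64) * Real.sqrt 5 ^ 4 * a * b ^ 3 * c ^ 5 + ((20421:ℝ)/128) * Real.sqrt 5 ^ 4 * a * b ^ 3 * c ^ 7 + ((-7297:ℝ)/128) * Real.sqrt 5 ^ 4 * a * b ^ 3 * c ^ 9 + ((-473:ℝ)/32) * Real.sqrt 5 ^ 4 * a * b ^ 5 * c + ((-1931:ℝ)/64) * Real.sqrt 5 ^ 4 * a * b ^ 5 * c ^ 3 + ((4191:ℝ)/32)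 * Real.sqrt 5 ^ 4 * a * b ^ 5 * c ^ 5 + ((-10955:ℝ)/128) * Real.sqrt 5 ^ 4 * a * b ^ 5 * c ^ 7 + ((2793:ℝ)/64) * Real.sqrt 5 ^ 4 * a * b ^ 7 * c + ((-4215:ℝ)/128) * Real.sqrt 5 ^ 4 * a * b ^ 7 * c ^ 3 + ((-3355:ℝ)/128) * Real.sqrt 5 ^ 4 * a * b ^ 7 * c ^ 5 + ((-169:ℝ)/4) * Real.sqrt 5 ^ 4 * a * b ^ 9 * c + ((3823:ℝ)/128) * Real.sqrt 5 ^ 4 * a * b ^ 9 * c ^ 3 + ((895:ℝ)/64) * Real.sqrt 5 ^ 4 * a * b ^ 11 * c + ((33:ℝ)/32) * Real.sqrt 5 ^ 5 * a * b * c + ((-335:ℝ)/32) * Real.sqrt 5 ^ 5 * a * b * c ^ 3 + ((2095:ℝ)/64) * Real.sqrt 5 ^ 5 * a * b * c ^ 5 + ((-2907:ℝ)/64) * Real.sqrt 5 ^ 5 * a * b * c ^ 7 + ((1877:ℝ)/64) * Real.sqrt 5 ^ 5 * a * b * c ^ 9 + ((-461:ℝ)/64) * Real.sqrt 5 ^ 5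 * a * b * c ^ 11 + ((-55:ℝ)/32) * Real.sqrt 5 ^ 5 * a * b ^ 3 * c + ((1049:ℝ)/32) * Real.sqrt 5 ^ 5 * a * b ^ 3 * c ^ 3 + ((-765:ℝ)/8) * Real.sqrt 5 ^ 5 * a * b ^ 3 * c ^ 5 + ((12697:ℝ)/128) * Real.sqrt 5 ^ 5 * a * b ^ 3 * c ^ 7 + ((-4429:ℝ)/128) * Real.sqrt 5 ^ 5 * a * b ^ 3 * c ^ 9 + ((-481:ℝ)/64) * Real.sqrt 5 ^ 5 * a * b ^ 5 * c + ((-677:ℝ)/32) * Real.sqrt 5 ^ 5 * a * b ^ 5 * c ^ 3 + ((1245:ℝ)/16) * Real.sqrt 5 ^ 5 * a * b ^ 5 * c ^ 5 + ((-6255:ℝ)/128) * Real.sqrt 5 ^ 5 * a * b ^ 5 * c ^ 7 + ((1469:ℝ)/64) * Real.sqrt 5 ^ 5 * a * b ^ 7 * c + ((-2029:ℝ)/128) * Real.sqrt 5 ^ 5 * a * b ^ 7 * c ^ 3 + ((-1745:ℝ)/128) * Real.sqrt 5 ^ 5 * a * b ^ 7 * c ^ 5 + ((-1385:ℝ)/64)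 * Real.sqrt 5 ^ 5 * a * b ^ 9 * c + ((1885:ℝ)/128) * Real.sqrt 5 ^ 5 * a * b ^ 9 * c ^ 3 + ((441:ℝ)/64) * Real.sqrt 5 ^ 5 * a * b ^ 11 * c + ((5:ℝ)/32) * Real.sqrt 5 ^ 6 * a * b * c + ((-65:ℝ)/32) * Real.sqrt 5 ^ 6 * a * b * c ^ 3 + ((27:ℝ)/4) * Real.sqrt 5 ^ 6 * a * b * c ^ 5 + ((-617:ℝ)/64) * Real.sqrt 5 ^ 6 * a * b * c ^ 7 + ((51:ℝ)/8) * Real.sqrt 5 ^ 6 * a * b * c ^ 9 + ((-103:ℝ)/64) * Real.sqrt 5 ^ 6 * a * b * c ^ 11 + ((5:ℝ)/32) * Real.sqrt 5 ^ 6 * a * b ^ 3 * c + ((305:ℝ)/64) * Real.sqrt 5 ^ 6 * a * b ^ 3 * c ^ 3 + ((-1057:ℝ)/64) * Real.sqrt 5 ^ 6 * a * b ^ 3 * c ^ 5 + ((2325:ℝ)/128) * Real.sqrt 5 ^ 6 * a * b ^ 3 * c ^ 7 + ((-841:ℝ)/128) * Real.sqrt 5 ^ 6 * a * b ^ 3 *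 c ^ 9 + ((-81:ℝ)/32) * Real.sqrt 5 ^ 6 * a * b ^ 5 * c + ((-33:ℝ)/64) * Real.sqrt 5 ^ 6 * a * b ^ 5 * c ^ 3 + ((345:ℝ)/32) * Real.sqrt 5 ^ 6 * a * b ^ 5 * c ^ 5 + ((-995:ℝ)/128) * Real.sqrt 5 ^ 6 * a * b ^ 5 * c ^ 7 + ((327:ℝ)/64) * Real.sqrt 5 ^ 6 * a * b ^ 7 * c + ((-675:ℝ)/128) * Real.sqrt 5 ^ 6 * a * b ^ 7 * c ^ 3 + ((-115:ℝ)/128) * Real.sqrt 5 ^ 6 * a * b ^ 7 * c ^ 5 + ((-129:ℝ)/32) * Real.sqrt 5 ^ 6 * a * b ^ 9 * c + ((391:ℝ)/128) * Real.sqrt 5 ^ 6 * a * b ^ 9 * c ^ 3 + ((73:ℝ)/64) * Real.sqrt 5 ^ 6 * a * b ^ 11 * c + ((-5:ℝ)/32) * Real.sqrt 5 ^ 7 * a * b * c ^ 3 + ((41:ℝ)/64) * Real.sqrt 5 ^ 7 * a * b * c ^ 5 + ((-63:ℝ)/64) * Real.sqrt 5 ^ 7 * a * b * c ^ 7 + ((43:ℝ)/64)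 * Real.sqrt 5 ^ 7 * a * b * c ^ 9 + ((-11:ℝ)/64) * Real.sqrt 5 ^ 7 * a * b * c ^ 11 + ((5:ℝ)/32) * Real.sqrt 5 ^ 7 * a * b ^ 3 * c + ((-17:ℝ)/16) * Real.sqrt 5 ^ 7 * a * b ^ 3 * c ^ 5 + ((193:ℝ)/128) * Real.sqrt 5 ^ 7 * a * b ^ 3 * c ^ 7 + ((-77:ℝ)/128) * Real.sqrt 5 ^ 7 * a * b ^ 3 * c ^ 9 + ((-41:ℝ)/64) * Real.sqrt 5 ^ 7 * a * b ^ 5 * c + ((17:ℝ)/16) * Real.sqrt 5 ^ 7 * a * b ^ 5 * c ^ 3 + ((-55:ℝ)/128) * Real.sqrt 5 ^ 7 * a * b ^ 5 * c ^ 7 + ((63:ℝ)/64) * Real.sqrt 5 ^ 7 * a * b ^ 7 * c + ((-193:ℝ)/128) * Real.sqrt 5 ^ 7 * a * b ^ 7 * c ^ 3 + ((55:ℝ)/128) * Real.sqrt 5 ^ 7 * a * b ^ 7 * c ^ 5 + ((-43:ℝ)/64) * Real.sqrt 5 ^ 7 * a * b ^ 9 * c + ((77:ℝ)/128) * Real.sqrt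 5 ^ 7 * a * b ^ 9 * c ^ 3 + ((11:ℝ)/64) * Real.sqrt 5 ^ 7 * a * b ^ 11 * c) * hs

set_option maxRecDepth 100000 in
set_option maxHeartbeats 2000000 in
private lemma lemK3 (a b c ξ : ℝ) (hs : Real.sqrt 5 ^ 2 = 5)
    (hsph : a ^ 2 + b ^ 2 + c ^ 2 = 1) (hxis : ((((1 + Real.sqrt 5) / 2) ^ 2 * a ^ 2 - b ^ 2) * (((1 + Real.sqrt 5) / 2) ^ 2 * b ^ 2 - c ^ 2) * (((1 + Real.sqrt 5) / 2) ^ 2 * c ^ 2 - a ^ 2) = ξ)) :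
    20 * (((3:ℝ)/2) * c ^ 4 + (-3) * b ^ 2 * c ^ 2 + ((3:ℝ)/2) * b ^ 4 + (-3) * a ^ 2 * c ^ 2 + (-3) * a ^ 2 * b ^ 2 + ((3:ℝ)/2) * a ^ 4 + ((1:ℝ)/2) * Real.sqrt 5 * c ^ 4 + (-1) * Real.sqrt 5 * b ^ 2 * c ^ 2 + ((1:ℝ)/2) * Real.sqrt 5 * b ^ 4 + (-1) * Real.sqrt 5 * a ^ 2 * c ^ 2 + (-1) * Real.sqrt 5 * a ^ 2 * b ^ 2 + ((1:ℝ)/2) * Real.sqrt 5 * a ^ 4) ^ 3 + 5 * ((1 + Real.sqrt 5) / 2) ^ 2 * (((3:ℝ)/2) * c ^ 4 + (-3) * b ^ 2 * c ^ 2 + ((3:ℝ)/2) * b ^ 4 + (-3) * a ^ 2 * c ^ 2 + (-3) * a ^ 2 * b ^ 2 + ((3:ℝ)/2) * a ^ 4 + ((1:ℝ)/2) * Real.sqrt 5 * c ^ 4 + (-1) * Real.sqrt 5 * b ^ 2 * c ^ 2 + ((1:ℝ)/2) * Real.sqrt 5 * b ^ 4 + (-1) * Real.sqrt 5 * a ^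 2 * c ^ 2 + (-1) * Real.sqrt 5 * a ^ 2 * b ^ 2 + ((1:ℝ)/2) * Real.sqrt 5 * a ^ 4) ^ 2 -
      90 * ((1 + Real.sqrt 5) / 2) * ξ * (((3:ℝ)/2) * c ^ 4 + (-3) * b ^ 2 * c ^ 2 + ((3:ℝ)/2) * b ^ 4 + (-3) * a ^ 2 * c ^ 2 + (-3) * a ^ 2 * b ^ 2 + ((3:ℝ)/2) * a ^ 4 + ((1:ℝ)/2) * Real.sqrt 5 * c ^ 4 + (-1) * Real.sqrt 5 * b ^ 2 * c ^ 2 + ((1:ℝ)/2) * Real.sqrt 5 * b ^ 4 + (-1) * Real.sqrt 5 * a ^ 2 * c ^ 2 + (-1) * Real.sqrt 5 * a ^ 2 * b ^ 2 + ((1:ℝ)/2) * Real.sqrt 5 * a ^ 4) - 135 * ξ ^ 2 -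
      20 * ((1 + Real.sqrt 5) / 2) ^ 3 * ξ = ((10) * c ^ 6 + ((-85:ℝ)/2) * b ^ 2 * c ^ 4 + ((25:ℝ)/2) * b ^ 4 * c ^ 2 + (10) * b ^ 6 + ((25:ℝ)/2) * a ^ 2 * c ^ 4 + (60) * a ^ 2 * b ^ 2 * c ^ 2 + ((-85:ℝ)/2) * a ^ 2 * b ^ 4 + ((-85:ℝ)/2) * a ^ 4 * c ^ 2 + ((25:ℝ)/2) * a ^ 4 * b ^ 2 + (10) * a ^ 6 + (5) * Real.sqrt 5 * c ^ 6 + ((-37:ℝ)/2) * Real.sqrt 5 * b ^ 2 * c ^ 4 + ((7:ℝ)/2) * Real.sqrt 5 * b ^ 4 * c ^ 2 + (5) * Real.sqrt 5 * b ^ 6 + ((7:ℝ)/2) * Real.sqrt 5 * a ^ 2 * c ^ 4 + (30) * Real.sqrt 5 * a ^ 2 * b ^ 2 * c ^ 2 + ((-37:ℝ)/2) * Real.sqrt 5 * a ^ 2 * b ^ 4 + ((-37:ℝ)/2) * Real.sqrt 5 * a ^ 4 * c ^ 2 + ((7:ℝ)/2) * Real.sqrt 5 * a ^ 4 * b ^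 2 + (5) * Real.sqrt 5 * a ^ 6) ^ 2 := by
  linear_combination (((5:ℝ)/2) + (135) * ξ + ((135:ℝ)/2) * c ^ 4 + (-135) * b ^ 2 * c ^ 2 + ((135:ℝ)/4) * b ^ 2 * c ^ 4 + ((135:ℝ)/2) * b ^ 4 + ((-135:ℝ)/16) * b ^ 4 * c ^ 2 + (-135) * a ^ 2 * c ^ 2 + ((-135:ℝ)/16) * a ^ 2 * c ^ 4 + (-135) * a ^ 2 * b ^ 2 + ((-8505:ℝ)/64) * a ^ 2 * b ^ 2 * c ^ 2 + ((135:ℝ)/4) * a ^ 2 * b ^ 4 + ((135:ℝ)/2) * a ^ 4 + ((135:ℝ)/4) * a ^ 4 * c ^ 2 + ((-135:ℝ)/16) * a ^ 4 * b ^ 2 + ((15:ℝ)/2) * Real.sqrt 5 + (90) * Real.sqrt 5 * c ^ 4 + (-180) * Real.sqrt 5 * b ^ 2 * c ^ 2 + ((135:ℝ)/2) * Real.sqrt 5 * b ^ 2 * c ^ 4 + (90) * Real.sqrt 5 * b ^ 4 + ((-135:ℝ)/4) * Real.sqrt 5 * b ^ 4 * c ^ 2 + (-180) * Real.sqrt 5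 * a ^ 2 * c ^ 2 + ((-135:ℝ)/4) * Real.sqrt 5 * a ^ 2 * c ^ 4 + (-180) * Real.sqrt 5 * a ^ 2 * b ^ 2 + ((405:ℝ)/32) * Real.sqrt 5 * a ^ 2 * b ^ 2 * c ^ 2 + ((135:ℝ)/2) * Real.sqrt 5 * a ^ 2 * b ^ 4 + (90) * Real.sqrt 5 * a ^ 4 + ((135:ℝ)/2) * Real.sqrt 5 * a ^ 4 * c ^ 2 + ((-135:ℝ)/4) * Real.sqrt 5 * a ^ 4 * b ^ 2 + ((15:ℝ)/2) * Real.sqrt 5 ^ 2 + ((45:ℝ)/2) * Real.sqrt 5 ^ 2 * c ^ 4 + (-45) * Real.sqrt 5 ^ 2 * b ^ 2 * c ^ 2 + ((135:ℝ)/4) * Real.sqrt 5 ^ 2 * b ^ 2 * c ^ 4 + ((45:ℝ)/2) * Real.sqrt 5 ^ 2 * b ^ 4 + ((-405:ℝ)/8) * Real.sqrt 5 ^ 2 * b ^ 4 * c ^ 2 + (-45) * Real.sqrt 5 ^ 2 * a ^ 2 * c ^ 2 + ((-405:ℝ)/8) * Real.sqrt 5 ^ 2 * a ^ 2 * c ^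 4 + (-45) * Real.sqrt 5 ^ 2 * a ^ 2 * b ^ 2 + ((2025:ℝ)/64) * Real.sqrt 5 ^ 2 * a ^ 2 * b ^ 2 * c ^ 2 + ((135:ℝ)/4) * Real.sqrt 5 ^ 2 * a ^ 2 * b ^ 4 + ((45:ℝ)/2) * Real.sqrt 5 ^ 2 * a ^ 4 + ((135:ℝ)/4) * Real.sqrt 5 ^ 2 * a ^ 4 * c ^ 2 + ((-405:ℝ)/8) * Real.sqrt 5 ^ 2 * a ^ 4 * b ^ 2 + ((5:ℝ)/2) * Real.sqrt 5 ^ 3 + ((-135:ℝ)/4) * Real.sqrt 5 ^ 3 * b ^ 4 * c ^ 2 + ((-135:ℝ)/4) * Real.sqrt 5 ^ 3 * a ^ 2 * c ^ 4 + ((675:ℝ)/16) * Real.sqrt 5 ^ 3 * a ^ 2 * b ^ 2 * c ^ 2 + ((-135:ℝ)/4) * Real.sqrt 5 ^ 3 * a ^ 4 * b ^ 2 + ((-135:ℝ)/16) * Real.sqrt 5 ^ 4 * b ^ 4 * c ^ 2 + ((-135:ℝ)/16) * Real.sqrt 5 ^ 4 * a ^ 2 * c ^ 4 + ((2025:ℝ)/64)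 * Real.sqrt 5 ^ 4 * a ^ 2 * b ^ 2 * c ^ 2 + ((-135:ℝ)/16) * Real.sqrt 5 ^ 4 * a ^ 4 * b ^ 2 + ((405:ℝ)/32) * Real.sqrt 5 ^ 5 * a ^ 2 * b ^ 2 * c ^ 2 + ((135:ℝ)/64) * Real.sqrt 5 ^ 6 * a ^ 2 * b ^ 2 * c ^ 2) * hxis + (((-475:ℝ)/16) + ((9125:ℝ)/16) * c ^ 2 + (-3020) * c ^ 4 + ((175175:ℝ)/32) * c ^ 6 + ((-599655:ℝ)/256) * c ^ 8 + ((-336465:ℝ)/256) * c ^ 10 + ((-8125:ℝ)/16) * b ^ 2 + ((2955:ℝ)/2) * b ^ 2 * c ^ 2 + ((426365:ℝ)/64) * b ^ 2 * c ^ 4 + ((-10758025:ℝ)/512) * b ^ 2 * c ^ 6 + ((6589775:ℝ)/512) * b ^ 2 * c ^ 8 + ((1026505:ℝ)/256) * b ^ 4 + ((-9789855:ℝ)/512) * b ^ 4 * c ^ 2 + ((49319225:ℝ)/4096) * b ^ 4 * c ^ 4 + ((56163255:ℝ)/4096) * b ^ 4 * c ^ 6 + ((-2341475:ℝ)/256)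 * b ^ 6 + ((9574475:ℝ)/256) * b ^ 6 * c ^ 2 + ((-111823745:ℝ)/4096) * b ^ 6 * c ^ 4 + ((1895595:ℝ)/256) * b ^ 8 + ((-9289175:ℝ)/512) * b ^ 8 * c ^ 2 + ((-336465:ℝ)/256) * b ^ 10 + ((-475:ℝ)/16) * a ^ 2 + ((4325:ℝ)/8) * a ^ 2 * c ^ 2 + ((-79345:ℝ)/32) * a ^ 2 * c ^ 4 + ((48095:ℝ)/16) * a ^ 2 * c ^ 6 + ((168785:ℝ)/256) * a ^ 2 * c ^ 8 + ((-1075:ℝ)/2) * a ^ 2 * b ^ 2 + ((189205:ℝ)/128) * a ^ 2 * b ^ 2 * c ^ 2 + ((723115:ℝ)/128) * a ^ 2 * b ^ 2 * c ^ 4 + ((-6373505:ℝ)/512) * a ^ 2 * b ^ 2 * c ^ 6 + ((889065:ℝ)/256) * a ^ 2 * b ^ 4 + ((-7260665:ℝ)/512) * a ^ 2 * b ^ 4 * c ^ 2 + ((14866065:ℝ)/4096) * a ^ 2 * b ^ 4 * c ^ 4 + ((-724765:ℝ)/128) * a ^ 2 * b ^ 6 + ((8942245:ℝ)/512) * a ^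 2 * b ^ 6 * c ^ 2 + ((450385:ℝ)/256) * a ^ 2 * b ^ 8 + ((-475:ℝ)/16) * a ^ 4 + ((8185:ℝ)/16) * a ^ 4 * c ^ 2 + ((-63515:ℝ)/32) * a ^ 4 * c ^ 4 + ((33485:ℝ)/32) * a ^ 4 * c ^ 6 + ((-18155:ℝ)/32) * a ^ 4 * b ^ 2 + ((180625:ℝ)/128) * a ^ 4 * b ^ 2 * c ^ 2 + ((332535:ℝ)/64) * a ^ 4 * b ^ 2 * c ^ 4 + ((739505:ℝ)/256) * a ^ 4 * b ^ 4 + ((-4997595:ℝ)/512) * a ^ 4 * b ^ 4 * c ^ 2 + ((-719745:ℝ)/256) * a ^ 4 * b ^ 6 + ((-475:ℝ)/16) * a ^ 6 + ((3945:ℝ)/8) * a ^ 6 * c ^ 2 + ((-24475:ℝ)/16) * a ^ 6 * c ^ 4 + ((-18745:ℝ)/32) * a ^ 6 * b ^ 2 + ((39255:ℝ)/32) * a ^ 6 * b ^ 2 * c ^ 2 + ((596025:ℝ)/256) * a ^ 6 * b ^ 4 + ((-65:ℝ)/2) * a ^ 8 + ((955:ℝ)/2) * a ^ 8 * c ^ 2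 + ((-1245:ℝ)/2) * a ^ 8 * b ^ 2 + ((-65:ℝ)/2) * a ^ 10 + (-25) * Real.sqrt 5 + ((3525:ℝ)/8) * Real.sqrt 5 * c ^ 2 + ((-71625:ℝ)/32) * Real.sqrt 5 * c ^ 4 + ((57825:ℝ)/16) * Real.sqrt 5 * c ^ 6 + ((-16915:ℝ)/32) * Real.sqrt 5 * c ^ 8 + ((-59815:ℝ)/32) * Real.sqrt 5 * c ^ 10 + ((-14925:ℝ)/32) * Real.sqrt 5 * b ^ 2 + ((185025:ℝ)/128) * Real.sqrt 5 * b ^ 2 * c ^ 2 + ((44725:ℝ)/8) * Real.sqrt 5 * b ^ 2 * c ^ 4 + ((-4514045:ℝ)/256) * Real.sqrt 5 * b ^ 2 * c ^ 6 + ((2660885:ℝ)/256) * Real.sqrt 5 * b ^ 2 * c ^ 8 + ((59925:ℝ)/16) * Real.sqrt 5 * b ^ 4 + ((-4430005:ℝ)/256) * Real.sqrt 5 * b ^ 4 * c ^ 2 + ((9807475:ℝ)/1024) * Real.sqrt 5 * b ^ 4 * c ^ 4 + ((13791605:ℝ)/1024) * Real.sqrt 5 * b ^ 4 * c ^ 6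 + ((-284625:ℝ)/32) * Real.sqrt 5 * b ^ 6 + ((4467125:ℝ)/128) * Real.sqrt 5 * b ^ 6 * c ^ 2 + ((-24547495:ℝ)/1024) * Real.sqrt 5 * b ^ 6 * c ^ 4 + ((249935:ℝ)/32) * Real.sqrt 5 * b ^ 8 + ((-4578805:ℝ)/256) * Real.sqrt 5 * b ^ 8 * c ^ 2 + ((-59815:ℝ)/32) * Real.sqrt 5 * b ^ 10 + (-25) * Real.sqrt 5 * a ^ 2 + ((3325:ℝ)/8) * Real.sqrt 5 * a ^ 2 * c ^ 2 + ((-7295:ℝ)/4) * Real.sqrt 5 * a ^ 2 * c ^ 4 + ((29125:ℝ)/16) * Real.sqrt 5 * a ^ 2 * c ^ 6 + ((40615:ℝ)/32) * Real.sqrt 5 * a ^ 2 * c ^ 8 + ((-15725:ℝ)/32) * Real.sqrt 5 * a ^ 2 * b ^ 2 + ((87205:ℝ)/64) * Real.sqrt 5 * a ^ 2 * b ^ 2 * c ^ 2 + ((326365:ℝ)/64) * Real.sqrt 5 * a ^ 2 * b ^ 2 * c ^ 4 + ((-2780925:ℝ)/256) * Real.sqrt 5 * a ^ 2 * b ^ 2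 * c ^ 6 + ((104225:ℝ)/32) * Real.sqrt 5 * a ^ 2 * b ^ 4 + ((-3255065:ℝ)/256) * Real.sqrt 5 * a ^ 2 * b ^ 4 * c ^ 2 + ((2142975:ℝ)/1024) * Real.sqrt 5 * a ^ 2 * b ^ 4 * c ^ 4 + ((-11215:ℝ)/2) * Real.sqrt 5 * a ^ 2 * b ^ 6 + ((4205325:ℝ)/256) * Real.sqrt 5 * a ^ 2 * b ^ 6 * c ^ 2 + ((72295:ℝ)/32) * Real.sqrt 5 * a ^ 2 * b ^ 8 + (-25) * Real.sqrt 5 * a ^ 4 + ((1575:ℝ)/4) * Real.sqrt 5 * a ^ 4 * c ^ 2 + (-1475) * Real.sqrt 5 * a ^ 4 * c ^ 4 + ((7145:ℝ)/16) * Real.sqrt 5 * a ^ 4 * c ^ 6 + ((-1035:ℝ)/2) * Real.sqrt 5 * a ^ 4 * b ^ 2 + ((77365:ℝ)/64) * Real.sqrt 5 * a ^ 4 * b ^ 2 * c ^ 2 + ((79425:ℝ)/16) * Real.sqrt 5 * a ^ 4 * b ^ 2 * c ^ 4 + ((86225:ℝ)/32) * Real.sqrt 5 * a ^ 4 * b ^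 4 + ((-2222325:ℝ)/256) * Real.sqrt 5 * a ^ 4 * b ^ 4 * c ^ 2 + ((-97535:ℝ)/32) * Real.sqrt 5 * a ^ 4 * b ^ 6 + (-25) * Real.sqrt 5 * a ^ 6 + ((1595:ℝ)/4) * Real.sqrt 5 * a ^ 6 * c ^ 2 + ((-4845:ℝ)/4) * Real.sqrt 5 * a ^ 6 * c ^ 4 + ((-1025:ℝ)/2) * Real.sqrt 5 * a ^ 6 * b ^ 2 + ((15125:ℝ)/16) * Real.sqrt 5 * a ^ 6 * b ^ 2 * c ^ 2 + ((73065:ℝ)/32) * Real.sqrt 5 * a ^ 6 * b ^ 4 + ((-65:ℝ)/2) * Real.sqrt 5 * a ^ 8 + ((845:ℝ)/2) * Real.sqrt 5 * a ^ 8 * c ^ 2 + ((-1135:ℝ)/2) * Real.sqrt 5 * a ^ 8 * b ^ 2 + ((-65:ℝ)/2) * Real.sqrt 5 * a ^ 10 + ((35:ℝ)/8) * Real.sqrt 5 ^ 2 + ((-475:ℝ)/8) * Real.sqrt 5 ^ 2 * c ^ 2 + ((791:ℝ)/4) * Real.sqrt 5 ^ 2 * c ^ 4 + ((-17635:ℝ)/32)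 * Real.sqrt 5 ^ 2 * c ^ 6 + ((69963:ℝ)/64) * Real.sqrt 5 ^ 2 * c ^ 8 + ((-53109:ℝ)/64) * Real.sqrt 5 ^ 2 * c ^ 10 + ((-1225:ℝ)/8) * Real.sqrt 5 ^ 2 * b ^ 2 + ((64313:ℝ)/64) * Real.sqrt 5 ^ 2 * b ^ 2 * c ^ 2 + ((-24795:ℝ)/32) * Real.sqrt 5 ^ 2 * b ^ 2 * c ^ 4 + ((-859349:ℝ)/512) * Real.sqrt 5 ^ 2 * b ^ 2 * c ^ 6 + ((820621:ℝ)/512) * Real.sqrt 5 ^ 2 * b ^ 2 * c ^ 8 + ((60431:ℝ)/64) * Real.sqrt 5 ^ 2 * b ^ 4 + ((-2662925:ℝ)/512) * Real.sqrt 5 ^ 2 * b ^ 4 * c ^ 2 + ((9939745:ℝ)/2048) * Real.sqrt 5 ^ 2 * b ^ 4 * c ^ 4 + ((3363719:ℝ)/2048) * Real.sqrt 5 ^ 2 * b ^ 4 * c ^ 6 + ((-142595:ℝ)/64) * Real.sqrt 5 ^ 2 * b ^ 6 + ((2434573:ℝ)/256) * Real.sqrt 5 ^ 2 * b ^ 6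 * c ^ 2 + ((-14676981:ℝ)/2048) * Real.sqrt 5 ^ 2 * b ^ 6 * c ^ 4 + ((141513:ℝ)/64) * Real.sqrt 5 ^ 2 * b ^ 8 + ((-2573869:ℝ)/512) * Real.sqrt 5 ^ 2 * b ^ 8 * c ^ 2 + ((-53109:ℝ)/64) * Real.sqrt 5 ^ 2 * b ^ 10 + ((35:ℝ)/8) * Real.sqrt 5 ^ 2 * a ^ 2 + (-55) * Real.sqrt 5 ^ 2 * a ^ 2 * c ^ 2 + ((4463:ℝ)/32) * Real.sqrt 5 ^ 2 * a ^ 2 * c ^ 4 + ((-3073:ℝ)/8) * Real.sqrt 5 ^ 2 * a ^ 2 * c ^ 6 + ((42229:ℝ)/64) * Real.sqrt 5 ^ 2 * a ^ 2 * c ^ 8 + ((-595:ℝ)/4) * Real.sqrt 5 ^ 2 * a ^ 2 * b ^ 2 + ((50883:ℝ)/64) * Real.sqrt 5 ^ 2 * a ^ 2 * b ^ 2 * c ^ 2 + ((8459:ℝ)/64) * Real.sqrt 5 ^ 2 * a ^ 2 * b ^ 2 * c ^ 4 + ((-1005989:ℝ)/512) * Real.sqrt 5 ^ 2 * a ^ 2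 * b ^ 2 * c ^ 6 + ((51311:ℝ)/64) * Real.sqrt 5 ^ 2 * a ^ 2 * b ^ 4 + ((-1859453:ℝ)/512) * Real.sqrt 5 ^ 2 * a ^ 2 * b ^ 4 * c ^ 2 + ((2726541:ℝ)/2048) * Real.sqrt 5 ^ 2 * a ^ 2 * b ^ 4 * c ^ 4 + ((-22381:ℝ)/16) * Real.sqrt 5 ^ 2 * a ^ 2 * b ^ 6 + ((2275861:ℝ)/512) * Real.sqrt 5 ^ 2 * a ^ 2 * b ^ 6 * c ^ 2 + ((56309:ℝ)/64) * Real.sqrt 5 ^ 2 * a ^ 2 * b ^ 8 + ((35:ℝ)/8) * Real.sqrt 5 ^ 2 * a ^ 4 + ((-355:ℝ)/8) * Real.sqrt 5 ^ 2 * a ^ 4 * c ^ 2 + ((1723:ℝ)/32) * Real.sqrt 5 ^ 2 * a ^ 4 * c ^ 4 + ((-5259:ℝ)/32) * Real.sqrt 5 ^ 2 * a ^ 4 * c ^ 6 + ((-4725:ℝ)/32) * Real.sqrt 5 ^ 2 * a ^ 4 * b ^ 2 + ((36833:ℝ)/64) * Real.sqrt 5 ^ 2 * a ^ 4 * b ^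 2 * c ^ 2 + ((23649:ℝ)/32) * Real.sqrt 5 ^ 2 * a ^ 4 * b ^ 2 * c ^ 4 + ((39221:ℝ)/64) * Real.sqrt 5 ^ 2 * a ^ 4 * b ^ 4 + ((-1262541:ℝ)/512) * Real.sqrt 5 ^ 2 * a ^ 4 * b ^ 4 * c ^ 2 + ((-62093:ℝ)/64) * Real.sqrt 5 ^ 2 * a ^ 4 * b ^ 6 + ((35:ℝ)/8) * Real.sqrt 5 ^ 2 * a ^ 6 + ((-25:ℝ)/2) * Real.sqrt 5 ^ 2 * a ^ 6 * c ^ 2 + ((-1143:ℝ)/8) * Real.sqrt 5 ^ 2 * a ^ 6 * c ^ 4 + ((-3705:ℝ)/32) * Real.sqrt 5 ^ 2 * a ^ 6 * b ^ 2 + ((13209:ℝ)/32) * Real.sqrt 5 ^ 2 * a ^ 6 * b ^ 2 * c ^ 2 + ((42431:ℝ)/64) * Real.sqrt 5 ^ 2 * a ^ 6 * b ^ 4 + ((-5:ℝ)/2) * Real.sqrt 5 ^ 2 * a ^ 8 + ((105:ℝ)/2) * Real.sqrt 5 ^ 2 * a ^ 8 * c ^ 2 + ((-335:ℝ)/2)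 * Real.sqrt 5 ^ 2 * a ^ 8 * b ^ 2 + ((-5:ℝ)/2) * Real.sqrt 5 ^ 2 * a ^ 10 + (5) * Real.sqrt 5 ^ 3 + (-85) * Real.sqrt 5 ^ 3 * c ^ 2 + ((11775:ℝ)/32) * Real.sqrt 5 ^ 3 * c ^ 4 + ((-4995:ℝ)/8) * Real.sqrt 5 ^ 3 * c ^ 6 + ((12255:ℝ)/32) * Real.sqrt 5 ^ 3 * c ^ 8 + ((-315:ℝ)/32) * Real.sqrt 5 ^ 3 * c ^ 10 + ((535:ℝ)/32) * Real.sqrt 5 ^ 3 * b ^ 2 + ((13285:ℝ)/64) * Real.sqrt 5 ^ 3 * b ^ 2 * c ^ 2 + ((-15705:ℝ)/16) * Real.sqrt 5 ^ 3 * b ^ 2 * c ^ 4 + ((63285:ℝ)/64) * Real.sqrt 5 ^ 3 * b ^ 2 * c ^ 6 + ((-3375:ℝ)/64) * Real.sqrt 5 ^ 3 * b ^ 2 * c ^ 8 + ((-765:ℝ)/4) * Real.sqrt 5 ^ 3 * b ^ 4 + ((-10845:ℝ)/64) * Real.sqrt 5 ^ 3 * b ^ 4 * c ^ 2 + ((1832895:ℝ)/1024)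 * Real.sqrt 5 ^ 3 * b ^ 4 * c ^ 4 + ((-1338975:ℝ)/1024) * Real.sqrt 5 ^ 3 * b ^ 4 * c ^ 6 + ((14175:ℝ)/32) * Real.sqrt 5 ^ 3 * b ^ 6 + ((-645:ℝ)/32) * Real.sqrt 5 ^ 3 * b ^ 6 * c ^ 2 + ((-1302255:ℝ)/1024) * Real.sqrt 5 ^ 3 * b ^ 6 * c ^ 4 + ((-10515:ℝ)/32) * Real.sqrt 5 ^ 3 * b ^ 8 + ((-2025:ℝ)/64) * Real.sqrt 5 ^ 3 * b ^ 8 * c ^ 2 + ((-315:ℝ)/32) * Real.sqrt 5 ^ 3 * b ^ 10 + (5) * Real.sqrt 5 ^ 3 * a ^ 2 + (-80) * Real.sqrt 5 ^ 3 * a ^ 2 * c ^ 2 + ((565:ℝ)/2) * Real.sqrt 5 ^ 3 * a ^ 2 * c ^ 4 + ((-2655:ℝ)/8) * Real.sqrt 5 ^ 3 * a ^ 2 * c ^ 6 + ((-165:ℝ)/32) * Real.sqrt 5 ^ 3 * a ^ 2 * c ^ 8 + ((695:ℝ)/32) * Real.sqrt 5 ^ 3 * a ^ 2 * b ^ 2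 + ((9605:ℝ)/64) * Real.sqrt 5 ^ 3 * a ^ 2 * b ^ 2 * c ^ 2 + ((-35775:ℝ)/64) * Real.sqrt 5 ^ 3 * a ^ 2 * b ^ 2 * c ^ 4 + ((11985:ℝ)/64) * Real.sqrt 5 ^ 3 * a ^ 2 * b ^ 2 * c ^ 6 + ((-5225:ℝ)/32) * Real.sqrt 5 ^ 3 * a ^ 2 * b ^ 4 + ((-6165:ℝ)/32) * Real.sqrt 5 ^ 3 * a ^ 2 * b ^ 4 * c ^ 2 + ((995535:ℝ)/1024) * Real.sqrt 5 ^ 3 * a ^ 2 * b ^ 4 * c ^ 4 + ((4635:ℝ)/16) * Real.sqrt 5 ^ 3 * a ^ 2 * b ^ 6 + ((10635:ℝ)/64) * Real.sqrt 5 ^ 3 * a ^ 2 * b ^ 6 * c ^ 2 + ((-165:ℝ)/32) * Real.sqrt 5 ^ 3 * a ^ 2 * b ^ 8 + (5) * Real.sqrt 5 ^ 3 * a ^ 4 + ((-275:ℝ)/4) * Real.sqrt 5 ^ 3 * a ^ 4 * c ^ 2 + ((795:ℝ)/4) * Real.sqrt 5 ^ 3 * a ^ 4 * c ^ 4 + ((105:ℝ)/8)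 * Real.sqrt 5 ^ 3 * a ^ 4 * c ^ 6 + ((85:ℝ)/4) * Real.sqrt 5 ^ 3 * a ^ 4 * b ^ 2 + ((5925:ℝ)/64) * Real.sqrt 5 ^ 3 * a ^ 4 * b ^ 2 * c ^ 2 + ((-1335:ℝ)/4) * Real.sqrt 5 ^ 3 * a ^ 4 * b ^ 2 * c ^ 4 + ((-5025:ℝ)/32) * Real.sqrt 5 ^ 3 * a ^ 4 * b ^ 4 + ((-20685:ℝ)/64) * Real.sqrt 5 ^ 3 * a ^ 4 * b ^ 4 * c ^ 2 + ((285:ℝ)/32) * Real.sqrt 5 ^ 3 * a ^ 4 * b ^ 6 + (5) * Real.sqrt 5 ^ 3 * a ^ 6 + ((-215:ℝ)/4) * Real.sqrt 5 ^ 3 * a ^ 6 * c ^ 2 + ((85:ℝ)/4) * Real.sqrt 5 ^ 3 * a ^ 6 * c ^ 4 + ((145:ℝ)/4) * Real.sqrt 5 ^ 3 * a ^ 6 * b ^ 2 + ((1315:ℝ)/8) * Real.sqrt 5 ^ 3 * a ^ 6 * b ^ 2 * c ^ 2 + ((815:ℝ)/32) * Real.sqrt 5 ^ 3 * a ^ 6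 * b ^ 4 + ((5:ℝ)/2) * Real.sqrt 5 ^ 3 * a ^ 8 + ((-35:ℝ)/2) * Real.sqrt 5 ^ 3 * a ^ 8 * c ^ 2 + ((-35:ℝ)/2) * Real.sqrt 5 ^ 3 * a ^ 8 * b ^ 2 + ((5:ℝ)/2) * Real.sqrt 5 ^ 3 * a ^ 10 + ((5:ℝ)/16) * Real.sqrt 5 ^ 4 + ((-175:ℝ)/16) * Real.sqrt 5 ^ 4 * c ^ 2 + ((275:ℝ)/4) * Real.sqrt 5 ^ 4 * c ^ 4 + ((-3255:ℝ)/32) * Real.sqrt 5 ^ 4 * c ^ 6 + ((-3285:ℝ)/128) * Real.sqrt 5 ^ 4 * c ^ 8 + ((13905:ℝ)/128) * Real.sqrt 5 ^ 4 * c ^ 10 + ((615:ℝ)/16) * Real.sqrt 5 ^ 4 * b ^ 2 + ((-8495:ℝ)/64) * Real.sqrt 5 ^ 4 * b ^ 2 * c ^ 2 + ((-435:ℝ)/8) * Real.sqrt 5 ^ 4 * b ^ 2 * c ^ 4 + ((49815:ℝ)/256) * Real.sqrt 5 ^ 4 * b ^ 2 * c ^ 6 + ((4995:ℝ)/256) *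 Real.sqrt 5 ^ 4 * b ^ 2 * c ^ 8 + ((-28365:ℝ)/128) * Real.sqrt 5 ^ 4 * b ^ 4 + ((145245:ℝ)/256) * Real.sqrt 5 ^ 4 * b ^ 4 * c ^ 2 + ((1347255:ℝ)/4096) * Real.sqrt 5 ^ 4 * b ^ 4 * c ^ 4 + ((-3047895:ℝ)/4096) * Real.sqrt 5 ^ 4 * b ^ 4 * c ^ 6 + ((60555:ℝ)/128) * Real.sqrt 5 ^ 4 * b ^ 6 + ((-119385:ℝ)/128) * Real.sqrt 5 ^ 4 * b ^ 6 * c ^ 2 + ((-734535:ℝ)/4096) * Real.sqrt 5 ^ 4 * b ^ 6 * c ^ 4 + ((-52335:ℝ)/128) * Real.sqrt 5 ^ 4 * b ^ 8 + ((106245:ℝ)/256) * Real.sqrt 5 ^ 4 * b ^ 8 * c ^ 2 + ((13905:ℝ)/128) * Real.sqrt 5 ^ 4 * b ^ 10 + ((5:ℝ)/16) * Real.sqrt 5 ^ 4 * a ^ 2 + ((-85:ℝ)/8) * Real.sqrt 5 ^ 4 * a ^ 2 * c ^ 2 + ((1685:ℝ)/32) * Real.sqrt 5 ^ 4 * a ^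 2 * c ^ 4 + ((-765:ℝ)/16) * Real.sqrt 5 ^ 4 * a ^ 2 * c ^ 6 + ((-13905:ℝ)/128) * Real.sqrt 5 ^ 4 * a ^ 2 * c ^ 8 + ((155:ℝ)/4) * Real.sqrt 5 ^ 4 * a ^ 2 * b ^ 2 + ((-1595:ℝ)/16) * Real.sqrt 5 ^ 4 * a ^ 2 * b ^ 2 * c ^ 2 + ((-3285:ℝ)/32) * Real.sqrt 5 ^ 4 * a ^ 2 * b ^ 2 * c ^ 4 + ((39015:ℝ)/256) * Real.sqrt 5 ^ 4 * a ^ 2 * b ^ 2 * c ^ 6 + ((-23005:ℝ)/128) * Real.sqrt 5 ^ 4 * a ^ 2 * b ^ 4 + ((73395:ℝ)/256) * Real.sqrt 5 ^ 4 * a ^ 2 * b ^ 4 * c ^ 2 + ((1818855:ℝ)/4096) * Real.sqrt 5 ^ 4 * a ^ 2 * b ^ 4 * c ^ 4 + ((18855:ℝ)/64) * Real.sqrt 5 ^ 4 * a ^ 2 * b ^ 6 + ((-62235:ℝ)/256) * Real.sqrt 5 ^ 4 * a ^ 2 * b ^ 6 * c ^ 2 + ((-13905:ℝ)/128) * Real.sqrt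 5 ^ 4 * a ^ 2 * b ^ 8 + ((5:ℝ)/16) * Real.sqrt 5 ^ 4 * a ^ 4 + ((-115:ℝ)/16) * Real.sqrt 5 ^ 4 * a ^ 4 * c ^ 2 + ((1395:ℝ)/32) * Real.sqrt 5 ^ 4 * a ^ 4 * c ^ 4 + ((2295:ℝ)/32) * Real.sqrt 5 ^ 4 * a ^ 4 * c ^ 6 + ((1075:ℝ)/32) * Real.sqrt 5 ^ 4 * a ^ 4 * b ^ 2 + ((-2385:ℝ)/32) * Real.sqrt 5 ^ 4 * a ^ 4 * b ^ 2 * c ^ 2 + ((-405:ℝ)/2) * Real.sqrt 5 ^ 4 * a ^ 4 * b ^ 2 * c ^ 4 + ((-18945:ℝ)/128) * Real.sqrt 5 ^ 4 * a ^ 4 * b ^ 4 + ((-1215:ℝ)/256) * Real.sqrt 5 ^ 4 * a ^ 4 * b ^ 4 * c ^ 2 + ((12825:ℝ)/128) * Real.sqrt 5 ^ 4 * a ^ 4 * b ^ 6 + ((5:ℝ)/16) * Real.sqrt 5 ^ 4 * a ^ 6 + ((-45:ℝ)/8) * Real.sqrt 5 ^ 4 * a ^ 6 * c ^ 2 + ((-135:ℝ)/16)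 * Real.sqrt 5 ^ 4 * a ^ 6 * c ^ 4 + ((1125:ℝ)/32) * Real.sqrt 5 ^ 4 * a ^ 6 * b ^ 2 + ((2025:ℝ)/32) * Real.sqrt 5 ^ 4 * a ^ 6 * b ^ 2 * c ^ 2 + ((-4725:ℝ)/128) * Real.sqrt 5 ^ 4 * a ^ 6 * b ^ 4 + ((-5:ℝ)/8) * Real.sqrt 5 ^ 5 * c ^ 2 + ((485:ℝ)/32) * Real.sqrt 5 ^ 5 * c ^ 4 + ((-315:ℝ)/16) * Real.sqrt 5 ^ 5 * c ^ 6 + ((-1125:ℝ)/32) * Real.sqrt 5 ^ 5 * c ^ 8 + ((1755:ℝ)/32) * Real.sqrt 5 ^ 5 * c ^ 10 + ((465:ℝ)/32) * Real.sqrt 5 ^ 5 * b ^ 2 + ((-2335:ℝ)/32) * Real.sqrt 5 ^ 5 * b ^ 2 * c ^ 2 + ((-45:ℝ)/4) * Real.sqrt 5 ^ 5 * b ^ 2 * c ^ 4 + ((24345:ℝ)/128) * Real.sqrt 5 ^ 5 * b ^ 2 * c ^ 6 + ((-13365:ℝ)/128) * Real.sqrt 5 ^ 5 * b ^ 2 *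 c ^ 8 + ((-1435:ℝ)/16) * Real.sqrt 5 ^ 5 * b ^ 4 + ((46485:ℝ)/128) * Real.sqrt 5 ^ 5 * b ^ 4 * c ^ 2 + ((12915:ℝ)/512) * Real.sqrt 5 ^ 5 * b ^ 4 * c ^ 4 + ((-230715:ℝ)/512) * Real.sqrt 5 ^ 5 * b ^ 4 * c ^ 6 + ((6525:ℝ)/32) * Real.sqrt 5 ^ 5 * b ^ 6 + ((-42525:ℝ)/64) * Real.sqrt 5 ^ 5 * b ^ 6 * c ^ 2 + ((83025:ℝ)/512) * Real.sqrt 5 ^ 5 * b ^ 6 * c ^ 4 + ((-5895:ℝ)/32) * Real.sqrt 5 ^ 5 * b ^ 8 + ((41445:ℝ)/128) * Real.sqrt 5 ^ 5 * b ^ 8 * c ^ 2 + ((1755:ℝ)/32) * Real.sqrt 5 ^ 5 * b ^ 10 + ((-5:ℝ)/8) * Real.sqrt 5 ^ 5 * a ^ 2 * c ^ 2 + ((45:ℝ)/4) * Real.sqrt 5 ^ 5 * a ^ 2 * c ^ 4 + ((-135:ℝ)/16) * Real.sqrt 5 ^ 5 * a ^ 2 * c ^ 6 + ((-1755:ℝ)/32)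 * Real.sqrt 5 ^ 5 * a ^ 2 * c ^ 8 + ((465:ℝ)/32) * Real.sqrt 5 ^ 5 * a ^ 2 * b ^ 2 + ((-3465:ℝ)/64) * Real.sqrt 5 ^ 5 * a ^ 2 * b ^ 2 * c ^ 2 + ((-3465:ℝ)/64) * Real.sqrt 5 ^ 5 * a ^ 2 * b ^ 2 * c ^ 4 + ((23625:ℝ)/128) * Real.sqrt 5 ^ 5 * a ^ 2 * b ^ 2 * c ^ 6 + ((-2385:ℝ)/32) * Real.sqrt 5 ^ 5 * a ^ 2 * b ^ 4 + ((30015:ℝ)/128) * Real.sqrt 5 ^ 5 * a ^ 2 * b ^ 4 * c ^ 2 + ((75735:ℝ)/512) * Real.sqrt 5 ^ 5 * a ^ 2 * b ^ 4 * c ^ 4 + ((1035:ℝ)/8) * Real.sqrt 5 ^ 5 * a ^ 2 * b ^ 6 + ((-31185:ℝ)/128) * Real.sqrt 5 ^ 5 * a ^ 2 * b ^ 6 * c ^ 2 + ((-1755:ℝ)/32) * Real.sqrt 5 ^ 5 * a ^ 2 * b ^ 8 + ((45:ℝ)/4) * Real.sqrt 5 ^ 5 * a ^ 4 * c ^ 4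 + ((405:ℝ)/16) * Real.sqrt 5 ^ 5 * a ^ 4 * c ^ 6 + ((45:ℝ)/4) * Real.sqrt 5 ^ 5 * a ^ 4 * b ^ 2 + ((-2745:ℝ)/64) * Real.sqrt 5 ^ 5 * a ^ 4 * b ^ 2 * c ^ 2 + ((-2295:ℝ)/16) * Real.sqrt 5 ^ 5 * a ^ 4 * b ^ 2 * c ^ 4 + ((-2025:ℝ)/32) * Real.sqrt 5 ^ 5 * a ^ 4 * b ^ 4 + ((9045:ℝ)/128) * Real.sqrt 5 ^ 5 * a ^ 4 * b ^ 4 * c ^ 2 + ((1755:ℝ)/32) * Real.sqrt 5 ^ 5 * a ^ 4 * b ^ 6 + ((45:ℝ)/4) * Real.sqrt 5 ^ 5 * a ^ 6 * b ^ 2 + ((405:ℝ)/16) * Real.sqrt 5 ^ 5 * a ^ 6 * b ^ 2 * c ^ 2 + ((-945:ℝ)/32) * Real.sqrt 5 ^ 5 * a ^ 6 * b ^ 4 + ((5:ℝ)/2) * Real.sqrt 5 ^ 6 * c ^ 4 + ((-45:ℝ)/32) * Real.sqrt 5 ^ 6 * c ^ 6 + ((-1125:ℝ)/64) * Real.sqrt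 5 ^ 6 * c ^ 8 + ((1215:ℝ)/64) * Real.sqrt 5 ^ 6 * c ^ 10 + ((5:ℝ)/2) * Real.sqrt 5 ^ 6 * b ^ 2 + ((-1405:ℝ)/64) * Real.sqrt 5 ^ 6 * b ^ 2 * c ^ 2 + ((-225:ℝ)/32) * Real.sqrt 5 ^ 6 * b ^ 2 * c ^ 4 + ((30375:ℝ)/256) * Real.sqrt 5 ^ 6 * b ^ 2 * c ^ 6 + ((-23355:ℝ)/256) * Real.sqrt 5 ^ 6 * b ^ 2 * c ^ 8 + ((-1465:ℝ)/64) * Real.sqrt 5 ^ 6 * b ^ 4 + ((42075:ℝ)/256) * Real.sqrt 5 ^ 6 * b ^ 4 * c ^ 2 + ((-96345:ℝ)/1024) * Real.sqrt 5 ^ 6 * b ^ 4 * c ^ 4 + ((-161055:ℝ)/1024) * Real.sqrt 5 ^ 6 * b ^ 4 * c ^ 6 + ((3825:ℝ)/64) * Real.sqrt 5 ^ 6 * b ^ 6 + ((-42075:ℝ)/128) * Real.sqrt 5 ^ 6 * b ^ 6 * c ^ 2 + ((220725:ℝ)/1024) * Real.sqrt 5 ^ 6 * b ^ 6 * c ^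 4 + ((-3735:ℝ)/64) * Real.sqrt 5 ^ 6 * b ^ 8 + ((42795:ℝ)/256) * Real.sqrt 5 ^ 6 * b ^ 8 * c ^ 2 + ((1215:ℝ)/64) * Real.sqrt 5 ^ 6 * b ^ 10 + ((45:ℝ)/32) * Real.sqrt 5 ^ 6 * a ^ 2 * c ^ 4 + ((-1215:ℝ)/64) * Real.sqrt 5 ^ 6 * a ^ 2 * c ^ 8 + ((5:ℝ)/2) * Real.sqrt 5 ^ 6 * a ^ 2 * b ^ 2 + ((-1035:ℝ)/64) * Real.sqrt 5 ^ 6 * a ^ 2 * b ^ 2 * c ^ 2 + ((-1395:ℝ)/64) * Real.sqrt 5 ^ 6 * a ^ 2 * b ^ 2 * c ^ 4 + ((29295:ℝ)/256) * Real.sqrt 5 ^ 6 * a ^ 2 * b ^ 2 * c ^ 6 + ((-1305:ℝ)/64) * Real.sqrt 5 ^ 6 * a ^ 2 * b ^ 4 + ((32715:ℝ)/256) * Real.sqrt 5 ^ 6 * a ^ 2 * b ^ 4 * c ^ 2 + ((-16605:ℝ)/1024) * Real.sqrt 5 ^ 6 * a ^ 2 * b ^ 4 * c ^ 4 + ((315:ℝ)/8)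 * Real.sqrt 5 ^ 6 * a ^ 2 * b ^ 6 + ((-36855:ℝ)/256) * Real.sqrt 5 ^ 6 * a ^ 2 * b ^ 6 * c ^ 2 + ((-1215:ℝ)/64) * Real.sqrt 5 ^ 6 * a ^ 2 * b ^ 8 + ((45:ℝ)/32) * Real.sqrt 5 ^ 6 * a ^ 4 * c ^ 4 + ((135:ℝ)/32) * Real.sqrt 5 ^ 6 * a ^ 4 * c ^ 6 + ((45:ℝ)/32) * Real.sqrt 5 ^ 6 * a ^ 4 * b ^ 2 + ((-945:ℝ)/64) * Real.sqrt 5 ^ 6 * a ^ 4 * b ^ 2 * c ^ 2 + ((-2025:ℝ)/32) * Real.sqrt 5 ^ 6 * a ^ 4 * b ^ 2 * c ^ 4 + ((-1215:ℝ)/64) * Real.sqrt 5 ^ 6 * a ^ 4 * b ^ 4 + ((16875:ℝ)/256) * Real.sqrt 5 ^ 6 * a ^ 4 * b ^ 4 * c ^ 2 + ((1215:ℝ)/64) * Real.sqrt 5 ^ 6 * a ^ 4 * b ^ 6 + ((45:ℝ)/32) * Real.sqrt 5 ^ 6 * a ^ 6 * b ^ 2 + ((135:ℝ)/32) * Real.sqrt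 5 ^ 6 * a ^ 6 * b ^ 2 * c ^ 2 + ((-945:ℝ)/64) * Real.sqrt 5 ^ 6 * a ^ 6 * b ^ 4 + ((5:ℝ)/32) * Real.sqrt 5 ^ 7 * c ^ 4 + ((-135:ℝ)/32) * Real.sqrt 5 ^ 7 * c ^ 8 + ((135:ℝ)/32) * Real.sqrt 5 ^ 7 * c ^ 10 + ((5:ℝ)/32) * Real.sqrt 5 ^ 7 * b ^ 2 + ((-325:ℝ)/64) * Real.sqrt 5 ^ 7 * b ^ 2 * c ^ 2 + ((-45:ℝ)/16) * Real.sqrt 5 ^ 7 * b ^ 2 * c ^ 4 + ((3285:ℝ)/64) * Real.sqrt 5 ^ 7 * b ^ 2 * c ^ 6 + ((-2835:ℝ)/64) * Real.sqrt 5 ^ 7 * b ^ 2 * c ^ 8 + ((-35:ℝ)/8) * Real.sqrt 5 ^ 7 * b ^ 4 + ((3735:ℝ)/64) * Real.sqrt 5 ^ 7 * b ^ 4 * c ^ 2 + ((-42165:ℝ)/512) * Real.sqrt 5 ^ 7 * b ^ 4 * c ^ 4 + ((-10395:ℝ)/512) * Real.sqrt 5 ^ 7 * b ^ 4 * c ^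 6 + ((405:ℝ)/32) * Real.sqrt 5 ^ 7 * b ^ 6 + ((-3825:ℝ)/32) * Real.sqrt 5 ^ 7 * b ^ 6 * c ^ 2 + ((68445:ℝ)/512) * Real.sqrt 5 ^ 7 * b ^ 6 * c ^ 4 + ((-405:ℝ)/32) * Real.sqrt 5 ^ 7 * b ^ 8 + ((3915:ℝ)/64) * Real.sqrt 5 ^ 7 * b ^ 8 * c ^ 2 + ((135:ℝ)/32) * Real.sqrt 5 ^ 7 * b ^ 10 + ((-135:ℝ)/32) * Real.sqrt 5 ^ 7 * a ^ 2 * c ^ 8 + ((5:ℝ)/32) * Real.sqrt 5 ^ 7 * a ^ 2 * b ^ 2 + ((-225:ℝ)/64) * Real.sqrt 5 ^ 7 * a ^ 2 * b ^ 2 * c ^ 2 + ((-405:ℝ)/64) * Real.sqrt 5 ^ 7 * a ^ 2 * b ^ 2 * c ^ 4 + ((3105:ℝ)/64) * Real.sqrt 5 ^ 7 * a ^ 2 * b ^ 2 * c ^ 6 + ((-135:ℝ)/32) * Real.sqrt 5 ^ 7 * a ^ 2 * b ^ 4 + ((405:ℝ)/8) * Real.sqrt 5 ^ 7 * a ^ 2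 * b ^ 4 * c ^ 2 + ((-23085:ℝ)/512) * Real.sqrt 5 ^ 7 * a ^ 2 * b ^ 4 * c ^ 4 + ((135:ℝ)/16) * Real.sqrt 5 ^ 7 * a ^ 2 * b ^ 6 + ((-3645:ℝ)/64) * Real.sqrt 5 ^ 7 * a ^ 2 * b ^ 6 * c ^ 2 + ((-135:ℝ)/32) * Real.sqrt 5 ^ 7 * a ^ 2 * b ^ 8 + ((-225:ℝ)/64) * Real.sqrt 5 ^ 7 * a ^ 4 * b ^ 2 * c ^ 2 + ((-135:ℝ)/8) * Real.sqrt 5 ^ 7 * a ^ 4 * b ^ 2 * c ^ 4 + ((-135:ℝ)/32) * Real.sqrt 5 ^ 7 * a ^ 4 * b ^ 4 + ((2295:ℝ)/64) * Real.sqrt 5 ^ 7 * a ^ 4 * b ^ 4 * c ^ 2 + ((135:ℝ)/32) * Real.sqrt 5 ^ 7 * a ^ 4 * b ^ 6 + ((-135:ℝ)/32) * Real.sqrt 5 ^ 7 * a ^ 6 * b ^ 4 + ((-135:ℝ)/256) * Real.sqrt 5 ^ 8 * c ^ 8 + ((135:ℝ)/256) * Real.sqrt 5 ^ 8 * c ^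 10 + ((-45:ℝ)/64) * Real.sqrt 5 ^ 8 * b ^ 2 * c ^ 2 + ((-45:ℝ)/64) * Real.sqrt 5 ^ 8 * b ^ 2 * c ^ 4 + ((7515:ℝ)/512) * Real.sqrt 5 ^ 8 * b ^ 2 * c ^ 6 + ((-6885:ℝ)/512) * Real.sqrt 5 ^ 8 * b ^ 2 * c ^ 8 + ((-135:ℝ)/256) * Real.sqrt 5 ^ 8 * b ^ 4 + ((7605:ℝ)/512) * Real.sqrt 5 ^ 8 * b ^ 4 * c ^ 2 + ((-158985:ℝ)/4096) * Real.sqrt 5 ^ 8 * b ^ 4 * c ^ 4 + ((43065:ℝ)/4096) * Real.sqrt 5 ^ 8 * b ^ 4 * c ^ 6 + ((405:ℝ)/256) * Real.sqrt 5 ^ 8 * b ^ 6 + ((-7785:ℝ)/256) * Real.sqrt 5 ^ 8 * b ^ 6 * c ^ 2 + ((219105:ℝ)/4096) * Real.sqrt 5 ^ 8 * b ^ 6 * c ^ 4 + ((-405:ℝ)/256) * Real.sqrt 5 ^ 8 * b ^ 8 + ((7965:ℝ)/512) * Real.sqrt 5 ^ 8 * b ^ 8 * c ^ 2 + ((135:ℝ)/256)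 * Real.sqrt 5 ^ 8 * b ^ 10 + ((-135:ℝ)/256) * Real.sqrt 5 ^ 8 * a ^ 2 * c ^ 8 + ((-45:ℝ)/128) * Real.sqrt 5 ^ 8 * a ^ 2 * b ^ 2 * c ^ 2 + ((-135:ℝ)/128) * Real.sqrt 5 ^ 8 * a ^ 2 * b ^ 2 * c ^ 4 + ((7155:ℝ)/512) * Real.sqrt 5 ^ 8 * a ^ 2 * b ^ 2 * c ^ 6 + ((-135:ℝ)/256) * Real.sqrt 5 ^ 8 * a ^ 2 * b ^ 4 + ((7155:ℝ)/512) * Real.sqrt 5 ^ 8 * a ^ 2 * b ^ 4 * c ^ 2 + ((-108945:ℝ)/4096) * Real.sqrt 5 ^ 8 * a ^ 2 * b ^ 4 * c ^ 4 + ((135:ℝ)/128) * Real.sqrt 5 ^ 8 * a ^ 2 * b ^ 6 + ((-7695:ℝ)/512) * Real.sqrt 5 ^ 8 * a ^ 2 * b ^ 6 * c ^ 2 + ((-135:ℝ)/256) * Real.sqrt 5 ^ 8 * a ^ 2 * b ^ 8 + ((-45:ℝ)/128) * Real.sqrt 5 ^ 8 * a ^ 4 * b ^ 2 * c ^ 2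 + ((-135:ℝ)/64) * Real.sqrt 5 ^ 8 * a ^ 4 * b ^ 2 * c ^ 4 + ((-135:ℝ)/256) * Real.sqrt 5 ^ 8 * a ^ 4 * b ^ 4 + ((6345:ℝ)/512) * Real.sqrt 5 ^ 8 * a ^ 4 * b ^ 4 * c ^ 2 + ((135:ℝ)/256) * Real.sqrt 5 ^ 8 * a ^ 4 * b ^ 6 + ((-135:ℝ)/256) * Real.sqrt 5 ^ 8 * a ^ 6 * b ^ 4 + ((-5:ℝ)/128) * Real.sqrt 5 ^ 9 * b ^ 2 * c ^ 2 + ((675:ℝ)/256) * Real.sqrt 5 ^ 9 * b ^ 2 * c ^ 6 + ((-675:ℝ)/256) * Real.sqrt 5 ^ 9 * b ^ 2 * c ^ 8 + ((675:ℝ)/256) * Real.sqrt 5 ^ 9 * b ^ 4 * c ^ 2 + ((-12825:ℝ)/1024) * Real.sqrt 5 ^ 9 * b ^ 4 * c ^ 4 + ((7425:ℝ)/1024) * Real.sqrt 5 ^ 9 * b ^ 4 * c ^ 6 + ((-675:ℝ)/128) * Real.sqrt 5 ^ 9 * b ^ 6 * c ^ 2 + ((15525:ℝ)/1024) * Real.sqrt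 5 ^ 9 * b ^ 6 * c ^ 4 + ((675:ℝ)/256) * Real.sqrt 5 ^ 9 * b ^ 8 * c ^ 2 + ((675:ℝ)/256) * Real.sqrt 5 ^ 9 * a ^ 2 * b ^ 2 * c ^ 6 + ((675:ℝ)/256) * Real.sqrt 5 ^ 9 * a ^ 2 * b ^ 4 * c ^ 2 + ((-10125:ℝ)/1024) * Real.sqrt 5 ^ 9 * a ^ 2 * b ^ 4 * c ^ 4 + ((-675:ℝ)/256) * Real.sqrt 5 ^ 9 * a ^ 2 * b ^ 6 * c ^ 2 + ((675:ℝ)/256) * Real.sqrt 5 ^ 9 * a ^ 4 * b ^ 4 * c ^ 2 + ((135:ℝ)/512) * Real.sqrt 5 ^ 10 * b ^ 2 * c ^ 6 + ((-135:ℝ)/512) * Real.sqrt 5 ^ 10 * b ^ 2 * c ^ 8 + ((135:ℝ)/512) * Real.sqrt 5 ^ 10 * b ^ 4 * c ^ 2 + ((-5535:ℝ)/2048) * Real.sqrt 5 ^ 10 * b ^ 4 * c ^ 4 + ((4455:ℝ)/2048) * Real.sqrt 5 ^ 10 * b ^ 4 * c ^ 6 + ((-135:ℝ)/256) * Real.sqrt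 5 ^ 10 * b ^ 6 * c ^ 2 + ((6075:ℝ)/2048) * Real.sqrt 5 ^ 10 * b ^ 6 * c ^ 4 + ((135:ℝ)/512) * Real.sqrt 5 ^ 10 * b ^ 8 * c ^ 2 + ((135:ℝ)/512) * Real.sqrt 5 ^ 10 * a ^ 2 * b ^ 2 * c ^ 6 + ((135:ℝ)/512) * Real.sqrt 5 ^ 10 * a ^ 2 * b ^ 4 * c ^ 2 + ((-4995:ℝ)/2048) * Real.sqrt 5 ^ 10 * a ^ 2 * b ^ 4 * c ^ 4 + ((-135:ℝ)/512) * Real.sqrt 5 ^ 10 * a ^ 2 * b ^ 6 * c ^ 2 + ((135:ℝ)/512) * Real.sqrt 5 ^ 10 * a ^ 4 * b ^ 4 * c ^ 2 + ((-405:ℝ)/1024) * Real.sqrt 5 ^ 11 * b ^ 4 * c ^ 4 + ((405:ℝ)/1024) * Real.sqrt 5 ^ 11 * b ^ 4 * c ^ 6 + ((405:ℝ)/1024) * Real.sqrt 5 ^ 11 * b ^ 6 * c ^ 4 + ((-405:ℝ)/1024) * Real.sqrt 5 ^ 11 * a ^ 2 * b ^ 4 * c ^ 4 + ((-135:ℝ)/4096)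 * Real.sqrt 5 ^ 12 * b ^ 4 * c ^ 4 + ((135:ℝ)/4096) * Real.sqrt 5 ^ 12 * b ^ 4 * c ^ 6 + ((135:ℝ)/4096) * Real.sqrt 5 ^ 12 * b ^ 6 * c ^ 4 + ((-135:ℝ)/4096) * Real.sqrt 5 ^ 12 * a ^ 2 * b ^ 4 * c ^ 4) * hsph + (((95:ℝ)/16) + (-120) * c ^ 2 + ((11489:ℝ)/16) * c ^ 4 + ((-54363:ℝ)/32) * c ^ 6 + ((400067:ℝ)/256) * c ^ 8 + ((-26319:ℝ)/128) * c ^ 10 + ((-65629:ℝ)/256) * c ^ 12 + ((765:ℝ)/8) * b ^ 2 + (-283) * b ^ 2 * c ^ 2 + ((-105009:ℝ)/64) * b ^ 2 * c ^ 4 + ((3395501:ℝ)/512) * b ^ 2 * c ^ 6 + ((-1853847:ℝ)/256) * b ^ 2 * c ^ 8 + ((1137801:ℝ)/512) * b ^ 2 * c ^ 10 + ((-231301:ℝ)/256) * b ^ 4 + ((2519853:ℝ)/512) * b ^ 4 * c ^ 2 + ((-20083965:ℝ)/4096) * b ^ 4 * c ^ 4 + ((-9306375:ℝ)/2048) * b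 ^ 4 * c ^ 6 + ((22638243:ℝ)/4096) * b ^ 4 * c ^ 8 + ((168399:ℝ)/64) * b ^ 6 + ((-6723199:ℝ)/512) * b ^ 6 * c ^ 2 + ((31443825:ℝ)/2048) * b ^ 6 * c ^ 4 + ((-5368097:ℝ)/2048) * b ^ 6 * c ^ 6 + ((-423779:ℝ)/128) * b ^ 8 + ((6445431:ℝ)/512) * b ^ 8 * c ^ 2 + ((-38624757:ℝ)/4096) * b ^ 8 * c ^ 4 + ((111603:ℝ)/64) * b ^ 10 + ((-1925349:ℝ)/512) * b ^ 10 * c ^ 2 + ((-65629:ℝ)/256) * b ^ 12 + (5) * Real.sqrt 5 + ((-745:ℝ)/8) * Real.sqrt 5 * c ^ 2 + ((17145:ℝ)/32) * Real.sqrt 5 * c ^ 4 + ((-37455:ℝ)/32) * Real.sqrt 5 * c ^ 6 + ((26465:ℝ)/32) * Real.sqrt 5 * c ^ 8 + ((2145:ℝ)/8) * Real.sqrt 5 * c ^ 10 + ((-11755:ℝ)/32) * Real.sqrt 5 * c ^ 12 + ((2825:ℝ)/32) * Real.sqrt 5 * b ^ 2 + ((-37665:ℝ)/128) * Real.sqrt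 5 * b ^ 2 * c ^ 2 + ((-163335:ℝ)/128) * Real.sqrt 5 * b ^ 2 * c ^ 4 + ((1375625:ℝ)/256) * Real.sqrt 5 * b ^ 2 * c ^ 6 + ((-729585:ℝ)/128) * Real.sqrt 5 * b ^ 2 * c ^ 8 + ((416505:ℝ)/256) * Real.sqrt 5 * b ^ 2 * c ^ 10 + ((-26955:ℝ)/32) * Real.sqrt 5 * b ^ 4 + ((1151715:ℝ)/256) * Real.sqrt 5 * b ^ 4 * c ^ 2 + ((-4369755:ℝ)/1024) * Real.sqrt 5 * b ^ 4 * c ^ 4 + ((-2217855:ℝ)/512) * Real.sqrt 5 * b ^ 4 * c ^ 6 + ((5048565:ℝ)/1024) * Real.sqrt 5 * b ^ 4 * c ^ 8 + ((80895:ℝ)/32) * Real.sqrt 5 * b ^ 6 + ((-3126715:ℝ)/256) * Real.sqrt 5 * b ^ 6 * c ^ 2 + ((7019565:ℝ)/512) * Real.sqrt 5 * b ^ 6 * c ^ 4 + ((-997285:ℝ)/512) * Real.sqrt 5 * b ^ 6 * c ^ 6 + ((-6685:ℝ)/2) * Real.sqrt 5 * b ^ 8 + ((3101355:ℝ)/256)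 * Real.sqrt 5 * b ^ 8 * c ^ 2 + ((-8923935:ℝ)/1024) * Real.sqrt 5 * b ^ 8 * c ^ 4 + ((30975:ℝ)/16) * Real.sqrt 5 * b ^ 10 + ((-980745:ℝ)/256) * Real.sqrt 5 * b ^ 10 * c ^ 2 + ((-11755:ℝ)/32) * Real.sqrt 5 * b ^ 12 + ((5:ℝ)/16) * Real.sqrt 5 ^ 2 + ((-45:ℝ)/4) * Real.sqrt 5 ^ 2 * c ^ 2 + ((1475:ℝ)/16) * Real.sqrt 5 ^ 2 * c ^ 4 + (-190) * Real.sqrt 5 ^ 2 * c ^ 6 + ((-4525:ℝ)/256) * Real.sqrt 5 ^ 2 * c ^ 8 + ((43965:ℝ)/128) * Real.sqrt 5 ^ 2 * c ^ 10 + ((-55485:ℝ)/256) * Real.sqrt 5 ^ 2 * c ^ 12 + ((405:ℝ)/8) * Real.sqrt 5 ^ 2 * b ^ 2 + ((-19205:ℝ)/64) * Real.sqrt 5 ^ 2 * b ^ 2 * c ^ 2 + ((2195:ℝ)/32) * Real.sqrt 5 ^ 2 * b ^ 2 * c ^ 4 + ((359005:ℝ)/256) * Real.sqrt 5 ^ 2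 * b ^ 2 * c ^ 6 + ((-119835:ℝ)/64) * Real.sqrt 5 ^ 2 * b ^ 2 * c ^ 8 + ((150795:ℝ)/256) * Real.sqrt 5 ^ 2 * b ^ 2 * c ^ 10 + ((-102445:ℝ)/256) * Real.sqrt 5 ^ 2 * b ^ 4 + ((617905:ℝ)/256) * Real.sqrt 5 ^ 2 * b ^ 4 * c ^ 2 + ((-12921915:ℝ)/4096) * Real.sqrt 5 ^ 2 * b ^ 4 * c ^ 4 + ((-1309005:ℝ)/2048) * Real.sqrt 5 ^ 2 * b ^ 4 * c ^ 6 + ((7260165:ℝ)/4096) * Real.sqrt 5 ^ 2 * b ^ 4 * c ^ 8 + ((74285:ℝ)/64) * Real.sqrt 5 ^ 2 * b ^ 6 + ((-1538195:ℝ)/256) * Real.sqrt 5 ^ 2 * b ^ 6 * c ^ 2 + ((15175395:ℝ)/2048) * Real.sqrt 5 ^ 2 * b ^ 6 * c ^ 4 + ((-3210435:ℝ)/2048) * Real.sqrt 5 ^ 2 * b ^ 6 * c ^ 6 + ((-198575:ℝ)/128) * Real.sqrt 5 ^ 2 * b ^ 8 + ((1499535:ℝ)/256) * Real.sqrt 5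 ^ 2 * b ^ 8 * c ^ 2 + ((-18119835:ℝ)/4096) * Real.sqrt 5 ^ 2 * b ^ 8 * c ^ 4 + ((61245:ℝ)/64) * Real.sqrt 5 ^ 2 * b ^ 10 + ((-483705:ℝ)/256) * Real.sqrt 5 ^ 2 * b ^ 10 * c ^ 2 + ((-55485:ℝ)/256) * Real.sqrt 5 ^ 2 * b ^ 12 + ((-5:ℝ)/8) * Real.sqrt 5 ^ 3 * c ^ 2 + ((265:ℝ)/16) * Real.sqrt 5 ^ 3 * c ^ 4 + ((-285:ℝ)/8) * Real.sqrt 5 ^ 3 * c ^ 6 + ((-585:ℝ)/16) * Real.sqrt 5 ^ 3 * c ^ 8 + ((2115:ℝ)/16) * Real.sqrt 5 ^ 3 * c ^ 10 + ((-1215:ℝ)/16) * Real.sqrt 5 ^ 3 * c ^ 12 + ((245:ℝ)/16) * Real.sqrt 5 ^ 3 * b ^ 2 + ((-14595:ℝ)/128) * Real.sqrt 5 ^ 3 * b ^ 2 * c ^ 2 + ((7355:ℝ)/128) * Real.sqrt 5 ^ 3 * b ^ 2 * c ^ 4 + ((142785:ℝ)/256) * Real.sqrt 5 ^ 3 * b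 ^ 2 * c ^ 6 + ((-108585:ℝ)/128) * Real.sqrt 5 ^ 3 * b ^ 2 * c ^ 8 + ((80865:ℝ)/256) * Real.sqrt 5 ^ 3 * b ^ 2 * c ^ 10 + ((-1015:ℝ)/8) * Real.sqrt 5 ^ 3 * b ^ 4 + ((239575:ℝ)/256) * Real.sqrt 5 ^ 3 * b ^ 4 * c ^ 2 + ((-739665:ℝ)/512) * Real.sqrt 5 ^ 3 * b ^ 4 * c ^ 4 + ((-4725:ℝ)/64) * Real.sqrt 5 ^ 3 * b ^ 4 * c ^ 6 + ((365175:ℝ)/512) * Real.sqrt 5 ^ 3 * b ^ 4 * c ^ 8 + ((1515:ℝ)/4) * Real.sqrt 5 ^ 3 * b ^ 6 + ((-609795:ℝ)/256) * Real.sqrt 5 ^ 3 * b ^ 6 * c ^ 2 + ((432585:ℝ)/128) * Real.sqrt 5 ^ 3 * b ^ 6 * c ^ 4 + ((-116775:ℝ)/128) * Real.sqrt 5 ^ 3 * b ^ 6 * c ^ 6 + ((-8235:ℝ)/16) * Real.sqrt 5 ^ 3 * b ^ 8 + ((601155:ℝ)/256) * Real.sqrt 5 ^ 3 * b ^ 8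 * c ^ 2 + ((-1026675:ℝ)/512) * Real.sqrt 5 ^ 3 * b ^ 8 * c ^ 4 + ((5175:ℝ)/16) * Real.sqrt 5 ^ 3 * b ^ 10 + ((-197505:ℝ)/256) * Real.sqrt 5 ^ 3 * b ^ 10 * c ^ 2 + ((-1215:ℝ)/16) * Real.sqrt 5 ^ 3 * b ^ 12 + ((5:ℝ)/2) * Real.sqrt 5 ^ 4 * c ^ 4 + ((-125:ℝ)/32) * Real.sqrt 5 ^ 4 * c ^ 6 + ((-4815:ℝ)/256) * Real.sqrt 5 ^ 4 * c ^ 8 + ((5355:ℝ)/128) * Real.sqrt 5 ^ 4 * c ^ 10 + ((-5535:ℝ)/256) * Real.sqrt 5 ^ 4 * c ^ 12 + ((5:ℝ)/2) * Real.sqrt 5 ^ 4 * b ^ 2 + ((-895:ℝ)/32) * Real.sqrt 5 ^ 4 * b ^ 2 * c ^ 2 + ((795:ℝ)/64) * Real.sqrt 5 ^ 4 * b ^ 2 * c ^ 4 + ((26955:ℝ)/128) * Real.sqrt 5 ^ 4 * b ^ 2 * c ^ 6 + ((-43965:ℝ)/128) * Real.sqrt 5 ^ 4 * b ^ 2 *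 c ^ 8 + ((2295:ℝ)/16) * Real.sqrt 5 ^ 4 * b ^ 2 * c ^ 10 + ((-7175:ℝ)/256) * Real.sqrt 5 ^ 4 * b ^ 4 + ((38055:ℝ)/128) * Real.sqrt 5 ^ 4 * b ^ 4 * c ^ 2 + ((-1217565:ℝ)/2048) * Real.sqrt 5 ^ 4 * b ^ 4 * c ^ 4 + ((119205:ℝ)/1024) * Real.sqrt 5 ^ 4 * b ^ 4 * c ^ 6 + ((432675:ℝ)/2048) * Real.sqrt 5 ^ 4 * b ^ 4 * c ^ 8 + ((5965:ℝ)/64) * Real.sqrt 5 ^ 4 * b ^ 6 + ((-103275:ℝ)/128) * Real.sqrt 5 ^ 4 * b ^ 6 * c ^ 2 + ((1446165:ℝ)/1024) * Real.sqrt 5 ^ 4 * b ^ 6 * c ^ 4 + ((-523125:ℝ)/1024) * Real.sqrt 5 ^ 4 * b ^ 6 * c ^ 6 + ((-17145:ℝ)/128) * Real.sqrt 5 ^ 4 * b ^ 8 + ((104085:ℝ)/128) * Real.sqrt 5 ^ 4 * b ^ 8 * c ^ 2 + ((-1700325:ℝ)/2048) * Real.sqrt 5 ^ 4 * b ^ 8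 * c ^ 4 + ((5625:ℝ)/64) * Real.sqrt 5 ^ 4 * b ^ 10 + ((-34965:ℝ)/128) * Real.sqrt 5 ^ 4 * b ^ 10 * c ^ 2 + ((-5535:ℝ)/256) * Real.sqrt 5 ^ 4 * b ^ 12 + ((5:ℝ)/32) * Real.sqrt 5 ^ 5 * c ^ 4 + ((-5:ℝ)/32) * Real.sqrt 5 ^ 5 * c ^ 6 + ((-135:ℝ)/32) * Real.sqrt 5 ^ 5 * c ^ 8 + ((135:ℝ)/16) * Real.sqrt 5 ^ 5 * c ^ 10 + ((-135:ℝ)/32) * Real.sqrt 5 ^ 5 * c ^ 12 + ((5:ℝ)/32) * Real.sqrt 5 ^ 5 * b ^ 2 + ((-695:ℝ)/128) * Real.sqrt 5 ^ 5 * b ^ 2 * c ^ 2 + ((295:ℝ)/128) * Real.sqrt 5 ^ 5 * b ^ 2 * c ^ 4 + ((17235:ℝ)/256) * Real.sqrt 5 ^ 5 * b ^ 2 * c ^ 6 + ((-15075:ℝ)/128) * Real.sqrt 5 ^ 5 * b ^ 2 * c ^ 8 + ((13635:ℝ)/256) * Real.sqrt 5 ^ 5 * b ^ 2 * c ^ 10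 + ((-145:ℝ)/32) * Real.sqrt 5 ^ 5 * b ^ 4 + ((20825:ℝ)/256) * Real.sqrt 5 ^ 5 * b ^ 4 * c ^ 2 + ((-7155:ℝ)/32) * Real.sqrt 5 ^ 5 * b ^ 4 * c ^ 4 + ((29745:ℝ)/256) * Real.sqrt 5 ^ 5 * b ^ 4 * c ^ 6 + ((2025:ℝ)/64) * Real.sqrt 5 ^ 5 * b ^ 4 * c ^ 8 + ((545:ℝ)/32) * Real.sqrt 5 ^ 5 * b ^ 6 + ((-58905:ℝ)/256) * Real.sqrt 5 ^ 5 * b ^ 6 * c ^ 2 + ((133155:ℝ)/256) * Real.sqrt 5 ^ 5 * b ^ 6 * c ^ 4 + ((-62775:ℝ)/256) * Real.sqrt 5 ^ 5 * b ^ 6 * c ^ 6 + ((-405:ℝ)/16) * Real.sqrt 5 ^ 5 * b ^ 8 + ((59625:ℝ)/256) * Real.sqrt 5 ^ 5 * b ^ 8 * c ^ 2 + ((-76275:ℝ)/256) * Real.sqrt 5 ^ 5 * b ^ 8 * c ^ 4 + ((135:ℝ)/8) * Real.sqrt 5 ^ 5 * b ^ 10 + ((-20115:ℝ)/256) * Real.sqrt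 5 ^ 5 * b ^ 10 * c ^ 2 + ((-135:ℝ)/32) * Real.sqrt 5 ^ 5 * b ^ 12 + ((-135:ℝ)/256) * Real.sqrt 5 ^ 6 * c ^ 8 + ((135:ℝ)/128) * Real.sqrt 5 ^ 6 * c ^ 10 + ((-135:ℝ)/256) * Real.sqrt 5 ^ 6 * c ^ 12 + ((-45:ℝ)/64) * Real.sqrt 5 ^ 6 * b ^ 2 * c ^ 2 + ((4275:ℝ)/256) * Real.sqrt 5 ^ 6 * b ^ 2 * c ^ 6 + ((-1935:ℝ)/64) * Real.sqrt 5 ^ 6 * b ^ 2 * c ^ 8 + ((3645:ℝ)/256) * Real.sqrt 5 ^ 6 * b ^ 2 * c ^ 10 + ((-135:ℝ)/256) * Real.sqrt 5 ^ 6 * b ^ 4 + ((4455:ℝ)/256) * Real.sqrt 5 ^ 6 * b ^ 4 * c ^ 2 + ((-140535:ℝ)/2048) * Real.sqrt 5 ^ 6 * b ^ 4 * c ^ 4 + ((60795:ℝ)/1024) * Real.sqrt 5 ^ 6 * b ^ 4 * c ^ 6 + ((-15255:ℝ)/2048) * Real.sqrt 5 ^ 6 * b ^ 4 * c ^ 8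 + ((135:ℝ)/64) * Real.sqrt 5 ^ 6 * b ^ 6 + ((-13005:ℝ)/256) * Real.sqrt 5 ^ 6 * b ^ 6 * c ^ 2 + ((159075:ℝ)/1024) * Real.sqrt 5 ^ 6 * b ^ 6 * c ^ 4 + ((-93555:ℝ)/1024) * Real.sqrt 5 ^ 6 * b ^ 6 * c ^ 6 + ((-405:ℝ)/128) * Real.sqrt 5 ^ 6 * b ^ 8 + ((13185:ℝ)/256) * Real.sqrt 5 ^ 6 * b ^ 8 * c ^ 2 + ((-177255:ℝ)/2048) * Real.sqrt 5 ^ 6 * b ^ 8 * c ^ 4 + ((135:ℝ)/64) * Real.sqrt 5 ^ 6 * b ^ 10 + ((-4455:ℝ)/256) * Real.sqrt 5 ^ 6 * b ^ 10 * c ^ 2 + ((-135:ℝ)/256) * Real.sqrt 5 ^ 6 * b ^ 12 + ((-5:ℝ)/128) * Real.sqrt 5 ^ 7 * b ^ 2 * c ^ 2 + ((5:ℝ)/128) * Real.sqrt 5 ^ 7 * b ^ 2 * c ^ 4 + ((675:ℝ)/256) * Real.sqrt 5 ^ 7 * b ^ 2 * c ^ 6 + ((-675:ℝ)/128) * Real.sqrt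 5 ^ 7 * b ^ 2 * c ^ 8 + ((675:ℝ)/256) * Real.sqrt 5 ^ 7 * b ^ 2 * c ^ 10 + ((685:ℝ)/256) * Real.sqrt 5 ^ 7 * b ^ 4 * c ^ 2 + ((-8775:ℝ)/512) * Real.sqrt 5 ^ 7 * b ^ 4 * c ^ 4 + ((675:ℝ)/32) * Real.sqrt 5 ^ 7 * b ^ 4 * c ^ 6 + ((-3375:ℝ)/512) * Real.sqrt 5 ^ 7 * b ^ 4 * c ^ 8 + ((-2025:ℝ)/256) * Real.sqrt 5 ^ 7 * b ^ 6 * c ^ 2 + ((4725:ℝ)/128) * Real.sqrt 5 ^ 7 * b ^ 6 * c ^ 4 + ((-3375:ℝ)/128) * Real.sqrt 5 ^ 7 * b ^ 6 * c ^ 6 + ((2025:ℝ)/256) * Real.sqrt 5 ^ 7 * b ^ 8 * c ^ 2 + ((-10125:ℝ)/512) * Real.sqrt 5 ^ 7 * b ^ 8 * c ^ 4 + ((-675:ℝ)/256) * Real.sqrt 5 ^ 7 * b ^ 10 * c ^ 2 + ((135:ℝ)/512) * Real.sqrt 5 ^ 8 * b ^ 2 * c ^ 6 + ((-135:ℝ)/256)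 * Real.sqrt 5 ^ 8 * b ^ 2 * c ^ 8 + ((135:ℝ)/512) * Real.sqrt 5 ^ 8 * b ^ 2 * c ^ 10 + ((135:ℝ)/512) * Real.sqrt 5 ^ 8 * b ^ 4 * c ^ 2 + ((-12825:ℝ)/4096) * Real.sqrt 5 ^ 8 * b ^ 4 * c ^ 4 + ((10125:ℝ)/2048) * Real.sqrt 5 ^ 8 * b ^ 4 * c ^ 6 + ((-8505:ℝ)/4096) * Real.sqrt 5 ^ 8 * b ^ 4 * c ^ 8 + ((-405:ℝ)/512) * Real.sqrt 5 ^ 8 * b ^ 6 * c ^ 2 + ((13365:ℝ)/2048) * Real.sqrt 5 ^ 8 * b ^ 6 * c ^ 4 + ((-11205:ℝ)/2048) * Real.sqrt 5 ^ 8 * b ^ 6 * c ^ 6 + ((405:ℝ)/512) * Real.sqrt 5 ^ 8 * b ^ 8 * c ^ 2 + ((-13905:ℝ)/4096) * Real.sqrt 5 ^ 8 * b ^ 8 * c ^ 4 + ((-135:ℝ)/512) * Real.sqrt 5 ^ 8 * b ^ 10 * c ^ 2 + ((-405:ℝ)/1024) * Real.sqrt 5 ^ 9 * b ^ 4 * c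 ^ 4 + ((405:ℝ)/512) * Real.sqrt 5 ^ 9 * b ^ 4 * c ^ 6 + ((-405:ℝ)/1024) * Real.sqrt 5 ^ 9 * b ^ 4 * c ^ 8 + ((405:ℝ)/512) * Real.sqrt 5 ^ 9 * b ^ 6 * c ^ 4 + ((-405:ℝ)/512) * Real.sqrt 5 ^ 9 * b ^ 6 * c ^ 6 + ((-405:ℝ)/1024) * Real.sqrt 5 ^ 9 * b ^ 8 * c ^ 4 + ((-135:ℝ)/4096) * Real.sqrt 5 ^ 10 * b ^ 4 * c ^ 4 + ((135:ℝ)/2048) * Real.sqrt 5 ^ 10 * b ^ 4 * c ^ 6 + ((-135:ℝ)/4096) * Real.sqrt 5 ^ 10 * b ^ 4 * c ^ 8 + ((135:ℝ)/2048) * Real.sqrt 5 ^ 10 * b ^ 6 * c ^ 4 + ((-135:ℝ)/2048) * Real.sqrt 5 ^ 10 * b ^ 6 * c ^ 6 + ((-135:ℝ)/4096) * Real.sqrt 5 ^ 10 * b ^ 8 * c ^ 4) * hs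

set_option maxRecDepth 100000 in
set_option maxHeartbeats 1000000 in
private lemma lemSmall (a b c ξ : ℝ) (hs : Real.sqrt 5 ^ 2 = 5)
    (hsph : a ^ 2 + b ^ 2 + c ^ 2 = 1) (hxis : ((((1 + Real.sqrt 5) / 2) ^ 2 * a ^ 2 - b ^ 2) * (((1 + Real.sqrt 5) / 2) ^ 2 * b ^ 2 - c ^ 2) * (((1 + Real.sqrt 5) / 2) ^ 2 * c ^ 2 - a ^ 2) = ξ)) :
    (8 * Real.sqrt 5 - 8) ^ 2 * a ^ 2 * b ^ 2 * c ^ 2 * ((1 + Real.sqrt 5) / 2) ^ 5 +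
      (14 * ((1 + Real.sqrt 5) / 2) * (((3:ℝ)/2) * c ^ 4 + (-3) * b ^ 2 * c ^ 2 + ((3:ℝ)/2) * b ^ 4 + (-3) * a ^ 2 * c ^ 2 + (-3) * a ^ 2 * b ^ 2 + ((3:ℝ)/2) * a ^ 4 + ((1:ℝ)/2) * Real.sqrt 5 * c ^ 4 + (-1) * Real.sqrt 5 * b ^ 2 * c ^ 2 + ((1:ℝ)/2) * Real.sqrt 5 * b ^ 4 + (-1) * Real.sqrt 5 * a ^ 2 * c ^ 2 + (-1) * Real.sqrt 5 * a ^ 2 * b ^ 2 + ((1:ℝ)/2) * Real.sqrt 5 * a ^ 4) - 22 * ξ - 4 * ((1 + Real.sqrt 5) / 2) ^ 3)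
      = 2 * ((10) * c ^ 6 + ((-85:ℝ)/2) * b ^ 2 * c ^ 4 + ((25:ℝ)/2) * b ^ 4 * c ^ 2 + (10) * b ^ 6 + ((25:ℝ)/2) * a ^ 2 * c ^ 4 + (60) * a ^ 2 * b ^ 2 * c ^ 2 + ((-85:ℝ)/2) * a ^ 2 * b ^ 4 + ((-85:ℝ)/2) * a ^ 4 * c ^ 2 + ((25:ℝ)/2) * a ^ 4 * b ^ 2 + (10) * a ^ 6 + (5) * Real.sqrt 5 * c ^ 6 + ((-37:ℝ)/2) * Real.sqrt 5 * b ^ 2 * c ^ 4 + ((7:ℝ)/2) * Real.sqrt 5 * b ^ 4 * c ^ 2 + (5) * Real.sqrt 5 * b ^ 6 + ((7:ℝ)/2) * Real.sqrt 5 * a ^ 2 * c ^ 4 + (30) * Real.sqrt 5 * a ^ 2 * b ^ 2 * c ^ 2 + ((-37:ℝ)/2) * Real.sqrt 5 * a ^ 2 * b ^ 4 + ((-37:ℝ)/2) * Real.sqrt 5 * a ^ 4 * c ^ 2 + ((7:ℝ)/2) * Real.sqrt 5 * a ^ 4 * b ^ 2 + (5) * Real.sqrt 5 * a ^ 6) :=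 by
  linear_combination ((22)) * hxis + (((-19:ℝ)/2) + (88) * c ^ 2 + ((-985:ℝ)/8) * c ^ 4 + ((-121:ℝ)/8) * b ^ 2 + ((-6151:ℝ)/32) * b ^ 2 * c ^ 2 + ((665:ℝ)/8) * b ^ 4 + ((-19:ℝ)/2) * a ^ 2 + ((199:ℝ)/2) * a ^ 2 * c ^ 2 + ((-29:ℝ)/8) * a ^ 2 * b ^ 2 + (-20) * a ^ 4 + (4) * Real.sqrt 5 + (4) * Real.sqrt 5 * c ^ 2 + ((-75:ℝ)/2) * Real.sqrt 5 * c ^ 4 + ((-47:ℝ)/2) * Real.sqrt 5 * b ^ 2 + ((-1609:ℝ)/16) * Real.sqrt 5 * b ^ 2 * c ^ 2 + ((35:ℝ)/2) * Real.sqrt 5 * b ^ 4 + (4) * Real.sqrt 5 * a ^ 2 + (36) * Real.sqrt 5 * a ^ 2 * c ^ 2 + ((17:ℝ)/2) * Real.sqrt 5 * a ^ 2 * b ^ 2 + (-10) * Real.sqrt 5 * a ^ 4 + ((7:ℝ)/2) * Real.sqrt 5 ^ 2 + (-16) * Real.sqrt 5 ^ 2 * c ^ 2 + ((55:ℝ)/4)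 * Real.sqrt 5 ^ 2 * c ^ 4 + ((-9:ℝ)/4) * Real.sqrt 5 ^ 2 * b ^ 2 + ((-189:ℝ)/32) * Real.sqrt 5 ^ 2 * b ^ 2 * c ^ 2 + ((-55:ℝ)/4) * Real.sqrt 5 ^ 2 * b ^ 4 + ((7:ℝ)/2) * Real.sqrt 5 ^ 2 * a ^ 2 + ((-11:ℝ)/2) * Real.sqrt 5 ^ 2 * a ^ 2 * c ^ 2 + ((33:ℝ)/4) * Real.sqrt 5 ^ 2 * a ^ 2 * b ^ 2 + ((11:ℝ)/2) * Real.sqrt 5 ^ 3 * c ^ 4 + ((11:ℝ)/2) * Real.sqrt 5 ^ 3 * b ^ 2 + ((-179:ℝ)/8) * Real.sqrt 5 ^ 3 * b ^ 2 * c ^ 2 + ((-11:ℝ)/2) * Real.sqrt 5 ^ 3 * b ^ 4 + ((11:ℝ)/2) * Real.sqrt 5 ^ 3 * a ^ 2 * b ^ 2 + ((11:ℝ)/8) * Real.sqrt 5 ^ 4 * c ^ 4 + ((11:ℝ)/8) * Real.sqrt 5 ^ 4 * b ^ 2 + ((-529:ℝ)/32) * Real.sqrt 5 ^ 4 * b ^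 2 * c ^ 2 + ((-11:ℝ)/8) * Real.sqrt 5 ^ 4 * b ^ 4 + ((11:ℝ)/8) * Real.sqrt 5 ^ 4 * a ^ 2 * b ^ 2 + ((-1:ℝ)/16) * Real.sqrt 5 ^ 5 * b ^ 2 * c ^ 2 + ((181:ℝ)/32) * Real.sqrt 5 ^ 6 * b ^ 2 * c ^ 2 + (2) * Real.sqrt 5 ^ 7 * b ^ 2 * c ^ 2) * hsph + ((2) + ((-39:ℝ)/2) * c ^ 2 + ((321:ℝ)/8) * c ^ 4 + ((-165:ℝ)/8) * c ^ 6 + ((9:ℝ)/8) * b ^ 2 + ((1831:ℝ)/32) * b ^ 2 * c ^ 2 + ((-2527:ℝ)/32) * b ^ 2 * c ^ 4 + ((-87:ℝ)/4) * b ^ 4 + ((-547:ℝ)/32) * b ^ 4 * c ^ 2 + ((165:ℝ)/8) * b ^ 6 + ((-1:ℝ)/2) * Real.sqrt 5 + ((11:ℝ)/2) * Real.sqrt 5 * c ^ 4 + ((-11:ℝ)/2) * Real.sqrt 5 * c ^ 6 + ((11:ℝ)/2) * Real.sqrt 5 * b ^ 2 + ((349:ℝ)/16) * Real.sqrt 5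 * b ^ 2 * c ^ 2 + ((-525:ℝ)/16) * Real.sqrt 5 * b ^ 2 * c ^ 4 + (-11) * Real.sqrt 5 * b ^ 4 + ((-261:ℝ)/16) * Real.sqrt 5 * b ^ 4 * c ^ 2 + ((11:ℝ)/2) * Real.sqrt 5 * b ^ 6 + ((11:ℝ)/8) * Real.sqrt 5 ^ 2 * c ^ 4 + ((-11:ℝ)/8) * Real.sqrt 5 ^ 2 * c ^ 6 + ((11:ℝ)/8) * Real.sqrt 5 ^ 2 * b ^ 2 + ((83:ℝ)/8) * Real.sqrt 5 ^ 2 * b ^ 2 * c ^ 2 + ((-105:ℝ)/8) * Real.sqrt 5 ^ 2 * b ^ 2 * c ^ 4 + ((-11:ℝ)/4) * Real.sqrt 5 ^ 2 * b ^ 4 + (-9) * Real.sqrt 5 ^ 2 * b ^ 4 * c ^ 2 + ((11:ℝ)/8) * Real.sqrt 5 ^ 2 * b ^ 6 + ((159:ℝ)/16) * Real.sqrt 5 ^ 3 * b ^ 2 * c ^ 2 + ((-159:ℝ)/16) * Real.sqrt 5 ^ 3 * b ^ 2 * c ^ 4 + ((-159:ℝ)/16) * Real.sqrt 5 ^ 3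 * b ^ 4 * c ^ 2 + ((181:ℝ)/32) * Real.sqrt 5 ^ 4 * b ^ 2 * c ^ 2 + ((-181:ℝ)/32) * Real.sqrt 5 ^ 4 * b ^ 2 * c ^ 4 + ((-181:ℝ)/32) * Real.sqrt 5 ^ 4 * b ^ 4 * c ^ 2 + (2) * Real.sqrt 5 ^ 5 * b ^ 2 * c ^ 2 + (-2) * Real.sqrt 5 ^ 5 * b ^ 2 * c ^ 4 + (-2) * Real.sqrt 5 ^ 5 * b ^ 4 * c ^ 2) * hs

set_option maxRecDepth 100000 in
set_option maxHeartbeats 2000000 in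
private lemma aux13 (a b c ξ D : ℝ)
    (hsph : a ^ 2 + b ^ 2 + c ^ 2 = 1)
    (hxi : (φ ^ 2 * a ^ 2 - b ^ 2) * (φ ^ 2 * b ^ 2 - c ^ 2) * (φ ^ 2 * c ^ 2 - a ^ 2) = ξ)
    (hne : φ ^ 2 * a ^ 2 - b ^ 2 ≠ 0)
    (hD : D = ((3 * (φ ^ 2 * a ^ 2 - b ^ 2) ^ 2 - 2 * φ * (φ ^ 2 * a ^ 2 - b ^ 2)) * (2 * φ ^ 2 * a * (-(A a b c)) - 2 * b * (-(A b c a))) * (φ ^ 2 * a ^ 2 - b ^ 2) - ((φ ^ 2 * a ^ 2 - b ^ 2) ^ 3 - φ * (φ ^ 2 * a ^ 2 - b ^ 2) ^ 2 - ξ) * (2 * φ ^ 2 * a * (-(A a b c)) - 2 * b * (-(A b c a)))) / (φ ^ 2 * a ^ 2 - b ^ 2) ^ 2) :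
    (D ^ 2 * φ ^ 5 + lpoly ξ (((φ ^ 2 * a ^ 2 - b ^ 2) ^ 3 - φ * (φ ^ 2 * a ^ 2 - b ^ 2) ^ 2 - ξ) / (φ ^ 2 * a ^ 2 - b ^ 2)) * tpoly ξ (((φ ^ 2 * a ^ 2 - b ^ 2) ^ 3 - φ * (φ ^ 2 * a ^ 2 - b ^ 2) ^ 2 - ξ) / (φ ^ 2 * a ^ 2 - b ^ 2))) ^ 2 = 4 * tpoly ξ (((φ ^ 2 * a ^ 2 - b ^ 2) ^ 3 - φ * (φ ^ 2 * a ^ 2 - b ^ 2) ^ 2 - ξ) / (φ ^ 2 * a ^ 2 - b ^ 2)) ^ 3 := by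
  have hs : Real.sqrt 5 ^ 2 = 5 := Real.sq_sqrt (by norm_num)
  have hxis : ((((1 + Real.sqrt 5) / 2) ^ 2 * a ^ 2 - b ^ 2) * (((1 + Real.sqrt 5) / 2) ^ 2 * b ^ 2 - c ^ 2) * (((1 + Real.sqrt 5) / 2) ^ 2 * c ^ 2 - a ^ 2) = ξ) := hxi
  have hU : (((φ ^ 2 * a ^ 2 - b ^ 2) ^ 3 - φ * (φ ^ 2 * a ^ 2 - b ^ 2) ^ 2 - ξ) / (φ ^ 2 * a ^ 2 - b ^ 2)) = (((3:ℝ)/2) * c ^ 4 + (-3) * b ^ 2 * c ^ 2 + ((3:ℝ)/2) * b ^ 4 + (-3) * a ^ 2 * c ^ 2 + (-3) * a ^ 2 * b ^ 2 + ((3:ℝ)/2) * a ^ 4 + ((1:ℝ)/2) * Real.sqrt 5 * c ^ 4 + (-1) * Real.sqrt 5 * b ^ 2 * c ^ 2 + ((1:ℝ)/2) * Real.sqrt 5 * b ^ 4 + (-1) * Real.sqrt 5 * a ^ 2 * c ^ 2 + (-1) * Real.sqrt 5 * a ^ 2 * b ^ 2 + ((1:ℝ)/2) * Real.sqrt 5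 * a ^ 4) := by
    rw [show (φ ^ 2 * a ^ 2 - b ^ 2) ^ 3 - φ * (φ ^ 2 * a ^ 2 - b ^ 2) ^ 2 - ξ = (((3:ℝ)/2) * c ^ 4 + (-3) * b ^ 2 * c ^ 2 + ((3:ℝ)/2) * b ^ 4 + (-3) * a ^ 2 * c ^ 2 + (-3) * a ^ 2 * b ^ 2 + ((3:ℝ)/2) * a ^ 4 + ((1:ℝ)/2) * Real.sqrt 5 * c ^ 4 + (-1) * Real.sqrt 5 * b ^ 2 * c ^ 2 + ((1:ℝ)/2) * Real.sqrt 5 * b ^ 4 + (-1) * Real.sqrt 5 * a ^ 2 * c ^ 2 + (-1) * Real.sqrt 5 * a ^ 2 * b ^ 2 + ((1:ℝ)/2) * Real.sqrt 5 * a ^ 4) * (φ ^ 2 * a ^ 2 - b ^ 2) from lemK1 a b c ξ hs hsph hxis]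
    exact mul_div_cancel_right₀ _ hne
  have hD' : D = ((8 * Real.sqrt 5 - 8) * a * b * c * ((10) * c ^ 6 + ((-85:ℝ)/2) * b ^ 2 * c ^ 4 + ((25:ℝ)/2) * b ^ 4 * c ^ 2 + (10) * b ^ 6 + ((25:ℝ)/2) * a ^ 2 * c ^ 4 + (60) * a ^ 2 * b ^ 2 * c ^ 2 + ((-85:ℝ)/2) * a ^ 2 * b ^ 4 + ((-85:ℝ)/2) * a ^ 4 * c ^ 2 + ((25:ℝ)/2) * a ^ 4 * b ^ 2 + (10) * a ^ 6 + (5) * Real.sqrt 5 * c ^ 6 + ((-37:ℝ)/2) * Real.sqrt 5 * b ^ 2 * c ^ 4 + ((7:ℝ)/2) * Real.sqrt 5 * b ^ 4 * c ^ 2 + (5) * Real.sqrt 5 * b ^ 6 + ((7:ℝ)/2) * Real.sqrt 5 * a ^ 2 * c ^ 4 + (30) * Real.sqrt 5 * a ^ 2 * b ^ 2 * c ^ 2 + ((-37:ℝ)/2) * Real.sqrt 5 * a ^ 2 * b ^ 4 + ((-37:ℝ)/2) * Real.sqrt 5 * a ^ 4 * c ^ 2 + ((7:ℝ)/2) * Real.sqrt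 5 * a ^ 4 * b ^ 2 + (5) * Real.sqrt 5 * a ^ 6)) := by
    rw [hD, show ((3 * (φ ^ 2 * a ^ 2 - b ^ 2) ^ 2 - 2 * φ * (φ ^ 2 * a ^ 2 - b ^ 2)) * (2 * φ ^ 2 * a * (-(A a b c)) - 2 * b * (-(A b c a))) * (φ ^ 2 * a ^ 2 - b ^ 2) - ((φ ^ 2 * a ^ 2 - b ^ 2) ^ 3 - φ * (φ ^ 2 * a ^ 2 - b ^ 2) ^ 2 - ξ) * (2 * φ ^ 2 * a * (-(A a b c)) - 2 * b * (-(A b c a)))) = ((8 * Real.sqrt 5 - 8) * a * b * c * ((10) * c ^ 6 + ((-85:ℝ)/2) * b ^ 2 * c ^ 4 + ((25:ℝ)/2) * b ^ 4 * c ^ 2 + (10) * b ^ 6 + ((25:ℝ)/2) * a ^ 2 * c ^ 4 + (60) * a ^ 2 * b ^ 2 * c ^ 2 + ((-85:ℝ)/2) * a ^ 2 * b ^ 4 + ((-85:ℝ)/2) * a ^ 4 * c ^ 2 + ((25:ℝ)/2) * a ^ 4 * b ^ 2 + (10) * a ^ 6 + (5) * Real.sqrt 5 * c ^ 6 + ((-37:ℝ)/2)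 * Real.sqrt 5 * b ^ 2 * c ^ 4 + ((7:ℝ)/2) * Real.sqrt 5 * b ^ 4 * c ^ 2 + (5) * Real.sqrt 5 * b ^ 6 + ((7:ℝ)/2) * Real.sqrt 5 * a ^ 2 * c ^ 4 + (30) * Real.sqrt 5 * a ^ 2 * b ^ 2 * c ^ 2 + ((-37:ℝ)/2) * Real.sqrt 5 * a ^ 2 * b ^ 4 + ((-37:ℝ)/2) * Real.sqrt 5 * a ^ 4 * c ^ 2 + ((7:ℝ)/2) * Real.sqrt 5 * a ^ 4 * b ^ 2 + (5) * Real.sqrt 5 * a ^ 6)) * (φ ^ 2 * a ^ 2 - b ^ 2) ^ 2 from lemK2 a b c ξ hs hsph hxis]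
    exact mul_div_cancel_right₀ _ (pow_ne_zero 2 hne)
  have hsm : (8 * Real.sqrt 5 - 8) ^ 2 * a ^ 2 * b ^ 2 * c ^ 2 * φ ^ 5 +
      (14 * φ * (((3:ℝ)/2) * c ^ 4 + (-3) * b ^ 2 * c ^ 2 + ((3:ℝ)/2) * b ^ 4 + (-3) * a ^ 2 * c ^ 2 + (-3) * a ^ 2 * b ^ 2 + ((3:ℝ)/2) * a ^ 4 + ((1:ℝ)/2) * Real.sqrt 5 * c ^ 4 + (-1) * Real.sqrt 5 * b ^ 2 * c ^ 2 + ((1:ℝ)/2) * Real.sqrt 5 * b ^ 4 + (-1) * Real.sqrt 5 * a ^ 2 * c ^ 2 + (-1) * Real.sqrt 5 * a ^ 2 * b ^ 2 + ((1:ℝ)/2) * Real.sqrt 5 * a ^ 4) - 22 * ξ - 4 * φ ^ 3) = 2 * ((10) * c ^ 6 + ((-85:ℝ)/2) * b ^ 2 * c ^ 4 + ((25:ℝ)/2) * b ^ 4 * c ^ 2 + (10) * b ^ 6 + ((25:ℝ)/2) * a ^ 2 * c ^ 4 + (60) * a ^ 2 * b ^ 2 * c ^ 2 + ((-85:ℝ)/2)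 * a ^ 2 * b ^ 4 + ((-85:ℝ)/2) * a ^ 4 * c ^ 2 + ((25:ℝ)/2) * a ^ 4 * b ^ 2 + (10) * a ^ 6 + (5) * Real.sqrt 5 * c ^ 6 + ((-37:ℝ)/2) * Real.sqrt 5 * b ^ 2 * c ^ 4 + ((7:ℝ)/2) * Real.sqrt 5 * b ^ 4 * c ^ 2 + (5) * Real.sqrt 5 * b ^ 6 + ((7:ℝ)/2) * Real.sqrt 5 * a ^ 2 * c ^ 4 + (30) * Real.sqrt 5 * a ^ 2 * b ^ 2 * c ^ 2 + ((-37:ℝ)/2) * Real.sqrt 5 * a ^ 2 * b ^ 4 + ((-37:ℝ)/2) * Real.sqrt 5 * a ^ 4 * c ^ 2 + ((7:ℝ)/2) * Real.sqrt 5 * a ^ 4 * b ^ 2 + (5) * Real.sqrt 5 * a ^ 6) :=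
    lemSmall a b c ξ hs hsph hxis
  rw [hD', hU]
  simp only [lpoly, tpoly]
  rw [show (20 * (((3:ℝ)/2) * c ^ 4 + (-3) * b ^ 2 * c ^ 2 + ((3:ℝ)/2) * b ^ 4 + (-3) * a ^ 2 * c ^ 2 + (-3) * a ^ 2 * b ^ 2 + ((3:ℝ)/2) * a ^ 4 + ((1:ℝ)/2) * Real.sqrt 5 * c ^ 4 + (-1) * Real.sqrt 5 * b ^ 2 * c ^ 2 + ((1:ℝ)/2) * Real.sqrt 5 * b ^ 4 + (-1) * Real.sqrt 5 * a ^ 2 * c ^ 2 + (-1) * Real.sqrt 5 * a ^ 2 * b ^ 2 + ((1:ℝ)/2) * Real.sqrt 5 * a ^ 4) ^ 3 + 5 * φ ^ 2 * (((3:ℝ)/2) * c ^ 4 + (-3) * b ^ 2 * c ^ 2 + ((3:ℝ)/2) * b ^ 4 + (-3) * a ^ 2 * c ^ 2 + (-3) * a ^ 2 * b ^ 2 + ((3:ℝ)/2) * a ^ 4 + ((1:ℝ)/2) * Real.sqrt 5 * c ^ 4 + (-1) * Real.sqrt 5 * b ^ 2 * c ^ 2 + ((1:ℝ)/2) * Real.sqrt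 5 * b ^ 4 + (-1) * Real.sqrt 5 * a ^ 2 * c ^ 2 + (-1) * Real.sqrt 5 * a ^ 2 * b ^ 2 + ((1:ℝ)/2) * Real.sqrt 5 * a ^ 4) ^ 2 - 90 * φ * ξ * (((3:ℝ)/2) * c ^ 4 + (-3) * b ^ 2 * c ^ 2 + ((3:ℝ)/2) * b ^ 4 + (-3) * a ^ 2 * c ^ 2 + (-3) * a ^ 2 * b ^ 2 + ((3:ℝ)/2) * a ^ 4 + ((1:ℝ)/2) * Real.sqrt 5 * c ^ 4 + (-1) * Real.sqrt 5 * b ^ 2 * c ^ 2 + ((1:ℝ)/2) * Real.sqrt 5 * b ^ 4 + (-1) * Real.sqrt 5 * a ^ 2 * c ^ 2 + (-1) * Real.sqrt 5 * a ^ 2 * b ^ 2 + ((1:ℝ)/2) * Real.sqrt 5 * a ^ 4) - 135 * ξ ^ 2 - 20 * φ ^ 3 * ξ : ℝ) = ((10) * c ^ 6 + ((-85:ℝ)/2) * b ^ 2 * c ^ 4 + ((25:ℝ)/2) * b ^ 4 * c ^ 2 + (10) * b ^ 6 + ((25:ℝ)/2) * a ^ 2 * c ^ 4 + (60) * a ^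 2 * b ^ 2 * c ^ 2 + ((-85:ℝ)/2) * a ^ 2 * b ^ 4 + ((-85:ℝ)/2) * a ^ 4 * c ^ 2 + ((25:ℝ)/2) * a ^ 4 * b ^ 2 + (10) * a ^ 6 + (5) * Real.sqrt 5 * c ^ 6 + ((-37:ℝ)/2) * Real.sqrt 5 * b ^ 2 * c ^ 4 + ((7:ℝ)/2) * Real.sqrt 5 * b ^ 4 * c ^ 2 + (5) * Real.sqrt 5 * b ^ 6 + ((7:ℝ)/2) * Real.sqrt 5 * a ^ 2 * c ^ 4 + (30) * Real.sqrt 5 * a ^ 2 * b ^ 2 * c ^ 2 + ((-37:ℝ)/2) * Real.sqrt 5 * a ^ 2 * b ^ 4 + ((-37:ℝ)/2) * Real.sqrt 5 * a ^ 4 * c ^ 2 + ((7:ℝ)/2) * Real.sqrt 5 * a ^ 4 * b ^ 2 + (5) * Real.sqrt 5 * a ^ 6) ^ 2 from lemK3 a b c ξ hs hsph hxis]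
  generalize hw : (((10) * c ^ 6 + ((-85:ℝ)/2) * b ^ 2 * c ^ 4 + ((25:ℝ)/2) * b ^ 4 * c ^ 2 + (10) * b ^ 6 + ((25:ℝ)/2) * a ^ 2 * c ^ 4 + (60) * a ^ 2 * b ^ 2 * c ^ 2 + ((-85:ℝ)/2) * a ^ 2 * b ^ 4 + ((-85:ℝ)/2) * a ^ 4 * c ^ 2 + ((25:ℝ)/2) * a ^ 4 * b ^ 2 + (10) * a ^ 6 + (5) * Real.sqrt 5 * c ^ 6 + ((-37:ℝ)/2) * Real.sqrt 5 * b ^ 2 * c ^ 4 + ((7:ℝ)/2) * Real.sqrt 5 * b ^ 4 * c ^ 2 + (5) * Real.sqrt 5 * b ^ 6 + ((7:ℝ)/2) * Real.sqrt 5 * a ^ 2 * c ^ 4 + (30) * Real.sqrt 5 * a ^ 2 * b ^ 2 * c ^ 2 + ((-37:ℝ)/2) * Real.sqrt 5 * a ^ 2 * b ^ 4 + ((-37:ℝ)/2) * Real.sqrt 5 * a ^ 4 * c ^ 2 + ((7:ℝ)/2) * Real.sqrt 5 * a ^ 4 * b ^ 2 + (5) * Real.sqrt 5 * a ^ 6)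 : ℝ) = w at hsm ⊢
  linear_combination (w ^ 4 * ((8 * Real.sqrt 5 - 8) ^ 2 * a ^ 2 * b ^ 2 * c ^ 2 * φ ^ 5 + (14 * φ * (((3:ℝ)/2) * c ^ 4 + (-3) * b ^ 2 * c ^ 2 + ((3:ℝ)/2) * b ^ 4 + (-3) * a ^ 2 * c ^ 2 + (-3) * a ^ 2 * b ^ 2 + ((3:ℝ)/2) * a ^ 4 + ((1:ℝ)/2) * Real.sqrt 5 * c ^ 4 + (-1) * Real.sqrt 5 * b ^ 2 * c ^ 2 + ((1:ℝ)/2) * Real.sqrt 5 * b ^ 4 + (-1) * Real.sqrt 5 * a ^ 2 * c ^ 2 + (-1) * Real.sqrt 5 * a ^ 2 * b ^ 2 + ((1:ℝ)/2) * Real.sqrt 5 * a ^ 4) - 22 * ξ - 4 * φ ^ 3) + 2 * w)) * hsm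

set_option maxHeartbeats 4000000 in
/-- Triple reduction of the differential system: along a solution of the characteristic
system of the icosahedral superflow, with `P = φ²p² − q²` nonvanishing and
`Υ = (P³ − φP² − ξ)/P`, the pair `(Υ, Υ′)` parametrizes the algebraic curve
`(Y²φ⁵ + 𝔩(X)𝔱(X))² = 4𝔱(X)³`. -/
theorem stmt13 (ξ : ℝ) (I : Set ℝ) (hI : I.OrdConnected) (p q r : ℝ → ℝ)
    (hp : ∀ t ∈ I, HasDerivAt p (-(A (p t) (q t) (r t))) t)
    (hq : ∀ t ∈ I, HasDerivAt q (-(A (q t) (r t) (p t))) t)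
    (hr : ∀ t ∈ I, HasDerivAt r (-(A (r t) (p t) (q t))) t)
    (hsph : ∀ t ∈ I, (p t) ^ 2 + (q t) ^ 2 + (r t) ^ 2 = 1)
    (hxi : ∀ t ∈ I, (φ ^ 2 * (p t) ^ 2 - (q t) ^ 2) * (φ ^ 2 * (q t) ^ 2 - (r t) ^ 2)
        * (φ ^ 2 * (r t) ^ 2 - (p t) ^ 2) = ξ)
    (P : ℝ → ℝ) (hP : ∀ t, P t = φ ^ 2 * (p t) ^ 2 - (q t) ^ 2)
    (hP0 : ∀ t ∈ I, P t ≠ 0)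
    (Υ : ℝ → ℝ) (hΥ : ∀ t, Υ t = ((P t) ^ 3 - φ * (P t) ^ 2 - ξ) / (P t)) :
    ∀ t ∈ I, DifferentiableAt ℝ Υ t ∧
      ((deriv Υ t) ^ 2 * φ ^ 5 + lpoly ξ (Υ t) * tpoly ξ (Υ t)) ^ 2
        = 4 * (tpoly ξ (Υ t)) ^ 3 := by
  intro t ht
  have hne : φ ^ 2 * p t ^ 2 - q t ^ 2 ≠ 0 := hP t ▸ hP0 t ht
  have hPd : HasDerivAt (fun u => φ ^ 2 * p u ^ 2 - q u ^ 2)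
      (2 * φ ^ 2 * p t * (-(A (p t) (q t) (r t))) - 2 * q t * (-(A (q t) (r t) (p t)))) t := by
    have h1 := (((hp t ht).fun_pow 2).const_mul (φ ^ 2)).fun_sub ((hq t ht).fun_pow 2)
    refine h1.congr_deriv ?_
    push_cast
    ring
  have hnum : HasDerivAt
      (fun u => (φ ^ 2 * p u ^ 2 - q u ^ 2) ^ 3 - φ * (φ ^ 2 * p u ^ 2 - q u ^ 2) ^ 2 - ξ)
      ((3 * (φ ^ 2 * p t ^ 2 - q t ^ 2) ^ 2 - 2 * φ * (φ ^ 2 * p t ^ 2 - q t ^ 2)) *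
        (2 * φ ^ 2 * p t * (-(A (p t) (q t) (r t))) - 2 * q t * (-(A (q t) (r t) (p t))))) t := by
    have h1 := ((hPd.fun_pow 3).fun_sub ((hPd.fun_pow 2).const_mul φ)).sub_const ξ
    refine h1.congr_deriv ?_
    push_cast
    ring
  have hdiv : HasDerivAt
      (fun u => ((φ ^ 2 * p u ^ 2 - q u ^ 2) ^ 3 - φ * (φ ^ 2 * p u ^ 2 - q u ^ 2) ^ 2 - ξ) /
        (φ ^ 2 * p u ^ 2 - q u ^ 2))
      (((3 * (φ ^ 2 * p t ^ 2 - q t ^ 2) ^ 2 - 2 * φ * (φ ^ 2 * p t ^ 2 - q t ^ 2)) *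
          (2 * φ ^ 2 * p t * (-(A (p t) (q t) (r t))) - 2 * q t * (-(A (q t) (r t) (p t)))) *
          (φ ^ 2 * p t ^ 2 - q t ^ 2) -
        ((φ ^ 2 * p t ^ 2 - q t ^ 2) ^ 3 - φ * (φ ^ 2 * p t ^ 2 - q t ^ 2) ^ 2 - ξ) *
          (2 * φ ^ 2 * p t * (-(A (p t) (q t) (r t))) - 2 * q t * (-(A (q t) (r t) (p t))))) /
        (φ ^ 2 * p t ^ 2 - q t ^ 2) ^ 2) t := by
    exact hnum.div hPd hne
  have hΥd : HasDerivAt Υ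
      (((3 * (φ ^ 2 * p t ^ 2 - q t ^ 2) ^ 2 - 2 * φ * (φ ^ 2 * p t ^ 2 - q t ^ 2)) *
          (2 * φ ^ 2 * p t * (-(A (p t) (q t) (r t))) - 2 * q t * (-(A (q t) (r t) (p t)))) *
          (φ ^ 2 * p t ^ 2 - q t ^ 2) -
        ((φ ^ 2 * p t ^ 2 - q t ^ 2) ^ 3 - φ * (φ ^ 2 * p t ^ 2 - q t ^ 2) ^ 2 - ξ) *
          (2 * φ ^ 2 * p t * (-(A (p t) (q t) (r t))) - 2 * q t * (-(A (q t) (r t) (p t))))) /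
        (φ ^ 2 * p t ^ 2 - q t ^ 2) ^ 2) t :=
    hdiv.congr_of_eventuallyEq (Filter.Eventually.of_forall fun u => by rw [hΥ u, hP u])
  refine ⟨hΥd.differentiableAt, ?_⟩
  rw [hΥd.deriv, hΥ t, hP t]
  exact aux13 (p t) (q t) (r t) ξ _ (hsph t ht) (hxi t ht) hne rfl
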